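/- arXiv:1007.0155 — 3 statements merged into one kernel-verified Lean document; each statement's English description precedes it below -/
import Mathlib

section
/- Let X be a Lévy process. Then for every Δ > 0, every x ∈ ℝ and every x₀ > 0, the following inequality holds: P(Δ·sup_{t≥0} X_t > x) · P(Δ·inf_{t∈[0,1]} X_t > −x₀) ≤ P(Δ·sup_{n∈ℕ} X_n > x − x₀), where the supremum over n ∈ ℕ is taken over integer time points (including n = 0, with X_0 = 0). -/
open MeasureTheory ProbabilityTheory Filter Topology Set

noncomputable section

/-- The sigma-algebra generated by the process `X` up to time `t`. -/
def pastSigma {Ω : Type*} [MeasureSpace Ω] (X : ℝ → Ω → ℝ) (t : ℝ) : MeasurableSpace Ω :=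
  ⨆ u ∈ Set.Icc (0:ℝ) t, MeasurableSpace.comap (X u) inferInstance

/-- A real-valued Lévy process: starts at `0`, has càdlàg sample paths, and has
stationary increments that are independent of the past. -/
structure IsLevyProcess {Ω : Type*} [MeasureSpace Ω] (X : ℝ → Ω → ℝ) : Prop where
  meas : ∀ t : ℝ, Measurable (X t)
  init : ∀ ω, X 0 ω = 0
  rightCont : ∀ ω, ∀ t : ℝ, 0 ≤ t → ContinuousWithinAt (fun u => X u ω) (Set.Ici t) t
  leftLim : ∀ ω, ∀ t : ℝ, 0 < t → ∃ l, Tendsto (fun u => X u ω) (𝓝[<] t) (𝓝 l)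
  indepIncr : ∀ t s : ℝ, 0 ≤ t → t < s →
    Indep (MeasurableSpace.comap (fun ω => X s ω - X t ω) inferInstance) (pastSigma X t) ℙ
  statIncr : ∀ t s : ℝ, 0 ≤ t → t < s →
    Measure.map (fun ω => X s ω - X t ω) ℙ = Measure.map (X (s - t)) ℙ

/-- Convergence in distribution of the family `V a` to `R` along the filter `l`:
convergence of the distribution functions at every continuity point of the
distribution function of `R`. -/
def TendstoInDistrib {Ω Ω' : Type*} [MeasureSpace Ω] [MeasureSpace Ω']
    (l : Filter ℝ) (V : ℝ → Ω → ℝ) (R : Ω' → ℝ) : Prop :=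
  ∀ x : ℝ, ContinuousAt (fun y => (ℙ {ω' | R ω' ≤ y}).toReal) x →
    Tendsto (fun a => (ℙ {ω | V a ω ≤ x}).toReal) l (𝓝 ((ℙ {ω' | R ω' ≤ x}).toReal))

/-! ### Auxiliary lemmas -/

/-- A càdlàg function on `[0, 1]` is bounded below on `[0, 1]`. -/
lemma bddBelow_image_of_cadlag (f : ℝ → ℝ)
    (hr : ∀ t : ℝ, 0 ≤ t → ContinuousWithinAt f (Set.Ici t) t)
    (hl : ∀ t : ℝ, 0 < t → ∃ l, Tendsto f (𝓝[<] t) (𝓝 l)) :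
    BddBelow (f '' Set.Icc 0 1) := by
  set S : Set ℝ := {t | t ∈ Set.Icc (0:ℝ) 1 ∧ BddBelow (f '' Set.Icc 0 t)} with hS
  have h0 : (0:ℝ) ∈ S := by
    refine ⟨⟨le_refl _, zero_le_one⟩, ?_⟩
    rw [Set.Icc_self]
    exact (Set.finite_singleton _).image f |>.bddBelow
  have hSne : S.Nonempty := ⟨0, h0⟩
  have hSbd : BddAbove S := ⟨1, fun t ht => ht.1.2⟩
  set s := sSup S with hs
  have hs01 : s ∈ Set.Icc (0:ℝ) 1 := ⟨le_csSup hSbd h0, csSup_le hSne fun t ht => ht.1.2⟩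
  have hsS : s ∈ S := by
    rcases eq_or_lt_of_le hs01.1 with h | h
    · rwa [← h]
    · obtain ⟨l, hltend⟩ := hl s h
      have hev : ∀ᶠ u in 𝓝[<] s, l - 1 < f u :=
        hltend (Ioi_mem_nhds (by linarith))
      rw [eventually_nhdsWithin_iff, Metric.eventually_nhds_iff] at hev
      obtain ⟨ε, hε, hεf⟩ := hev
      obtain ⟨t, htS, htgt⟩ := exists_lt_of_lt_csSup hSne (show s - min ε s / 2 < s by
        have : 0 < min ε s := lt_min hε h
        linarith)
      obtain ⟨b, hb⟩ := htS.2
      refine ⟨⟨hs01.1, hs01.2⟩, ⟨min b (min (l-1) (f s)), ?_⟩⟩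
      rintro y ⟨u, hu, rfl⟩
      rcases le_or_gt u t with hut | hut
      · exact le_trans (min_le_left _ _) (hb ⟨u, ⟨hu.1, hut⟩, rfl⟩)
      · rcases eq_or_lt_of_le hu.2 with rfl | hus
        · exact le_trans (min_le_right _ _) (min_le_right _ _)
        · refine le_trans (min_le_right _ _) (le_trans (min_le_left _ _) (le_of_lt ?_))
          refine hεf ?_ hus
          have h1 : s - min ε s / 2 < u := lt_trans htgt hut
          have : 0 < min ε s := lt_min hε h
          have h2 : min ε s ≤ ε := min_le_left _ _
          rw [Real.dist_eq, abs_lt]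
          constructor <;> linarith
  rcases eq_or_lt_of_le hs01.2 with h1 | h1
  · have := hsS.2; rwa [h1] at this
  · exfalso
    have hrc := hr s hs01.1
    have hev : ∀ᶠ u in 𝓝[Set.Ici s] s, f s - 1 < f u :=
      hrc (Ioi_mem_nhds (by linarith))
    rw [eventually_nhdsWithin_iff, Metric.eventually_nhds_iff] at hev
    obtain ⟨ε, hε, hεf⟩ := hev
    set t := min (s + ε/2) 1 with ht
    have hst : s < t := lt_min (by linarith) h1
    have htmem : t ∈ S := by
      refine ⟨⟨le_trans hs01.1 hst.le, min_le_right _ _⟩, ?_⟩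
      obtain ⟨b, hb⟩ := hsS.2
      refine ⟨min b (f s - 1), ?_⟩
      rintro y ⟨u, hu, rfl⟩
      rcases le_or_gt u s with hus | hus
      · exact le_trans (min_le_left _ _) (hb ⟨u, ⟨hu.1, hus⟩, rfl⟩)
      · refine le_trans (min_le_right _ _) (le_of_lt ?_)
        refine hεf ?_ hus.le
        have h2 : u ≤ s + ε/2 := le_trans hu.2 (min_le_left _ _)
        rw [Real.dist_eq, abs_lt]
        constructor <;> linarith
    exact absurd (le_csSup hSbd htmem) (not_le.mpr hst)

section Levy

variable {Ω : Type*} [MeasureSpace Ω] {X : ℝ → Ω → ℝ}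

lemma comap_le_pastSigma (X : ℝ → Ω → ℝ) {u t : ℝ} (h0 : 0 ≤ u) (hut : u ≤ t) :
    MeasurableSpace.comap (X u) inferInstance ≤ pastSigma X t :=
  le_iSup₂ (f := fun (u:ℝ) (_ : u ∈ Set.Icc (0:ℝ) t) =>
    MeasurableSpace.comap (X u) inferInstance) u (Set.mem_Icc.mpr ⟨h0, hut⟩)

lemma measurable_past (X : ℝ → Ω → ℝ) {u t : ℝ} (h0 : 0 ≤ u) (hut : u ≤ t) :
    Measurable[pastSigma X t] (X u) := by
  rw [measurable_iff_comap_le]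
  exact comap_le_pastSigma X h0 hut

/-- The increments of `X` over the unit intervals `[j, j+1]`, `j ∈ ℕ`. -/
def levyY (X : ℝ → Ω → ℝ) (j : ℕ) : Ω → ℝ := fun ω => X ((j:ℝ) + 1) ω - X (j:ℝ) ω

lemma levyY_measurable_past (hX : IsLevyProcess X) {i n : ℕ} (hin : i < n) :
    Measurable[pastSigma X (n:ℝ)] (levyY X i) := by
  apply Measurable.sub
  · have h : ((i:ℝ) + 1) = ((i+1 : ℕ) : ℝ) := by push_cast; ring
    rw [h]
    exact measurable_past X (by positivity) (by exact_mod_cast hin)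
  · exact measurable_past X (by positivity) (by exact_mod_cast hin.le)

/-- The unit-interval increments of a Lévy process are (jointly) independent. -/
lemma levy_iIndep [IsProbabilityMeasure (ℙ : Measure Ω)] (hX : IsLevyProcess X) :
    iIndep (fun j : ℕ => MeasurableSpace.comap (levyY X j) inferInstance) ℙ := by
  rw [iIndep_iff]
  have key : ∀ (n : ℕ) (s : Finset ℕ), (∀ i ∈ s, i < n) → ∀ f : ℕ → Set Ω,
      (∀ i ∈ s, MeasurableSet[MeasurableSpace.comap (levyY X i) inferInstance] (f i)) →
      ℙ (⋂ i ∈ s, f i) = ∏ i ∈ s, ℙ (f i) := by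
    intro n
    induction n with
    | zero => intro s hs f _
              have : s = ∅ := Finset.eq_empty_of_forall_notMem (fun i hi => Nat.not_lt_zero i (hs i hi))
              simp [this]
    | succ n ih =>
      intro s hs f hf
      by_cases hn : n ∈ s
      · have hberase : ∀ i ∈ s.erase n, i < n := by
          intro i hi
          have h1 := hs i (Finset.mem_of_mem_erase hi)
          have h2 := Finset.ne_of_mem_erase hi
          omega
        have hmeas_erase : MeasurableSet[pastSigma X (n:ℝ)] (⋂ i ∈ s.erase n, f i) := by
          refine MeasurableSet.biInter (Finset.countable_toSet _) ?_
          intro i hi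
          exact ((levyY_measurable_past hX (hberase i hi)).comap_le) _
            (hf i (Finset.mem_of_mem_erase hi))
        have hindep := hX.indepIncr (n:ℝ) ((n:ℝ)+1) (by positivity) (by linarith)
        have h1 : MeasurableSet[MeasurableSpace.comap (levyY X n) inferInstance] (f n) := hf n hn
        conv_lhs => rw [← Finset.insert_erase hn]
        rw [Finset.set_biInter_insert]
        conv_rhs => rw [← Finset.insert_erase hn]
        rw [Finset.prod_insert (Finset.notMem_erase n s)]
        rw [(Indep_iff _ _ _).1 hindep (f n) _ h1 hmeas_erase]
        rw [ih (s.erase n) hberase f (fun i hi => hf i (Finset.mem_of_mem_erase hi))]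
      · refine ih s (fun i hi => ?_) f hf
        have h1 := hs i hi
        have h2 : i ≠ n := fun h => hn (h ▸ hi)
        omega
  intro s f hf
  exact key (s.sup id + 1) s (fun i hi => Nat.lt_succ_of_le (Finset.le_sup (f := id) hi)) f hf

lemma levy_partial_sum_measurable (hX : IsLevyProcess X) (k : ℕ) :
    ∀ n : ℕ, Measurable[⨆ j ≥ k, MeasurableSpace.comap (levyY X j) inferInstance]
      (fun ω => X ((k+1+n : ℕ):ℝ) ω - X (k:ℝ) ω) := by
  set m := ⨆ j ≥ k, MeasurableSpace.comap (levyY X j) inferInstance with hm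
  have hY : ∀ j, k ≤ j → Measurable[m] (levyY X j) := by
    intro j hj
    rw [measurable_iff_comap_le, hm]
    exact le_iSup₂ (f := fun (j:ℕ) (_ : j ≥ k) =>
      MeasurableSpace.comap (levyY X j) inferInstance) j hj
  intro n
  induction n with
  | zero =>
    have h : (fun ω => X ((k+1+0 : ℕ):ℝ) ω - X (k:ℝ) ω) = levyY X k := by
      funext ω; simp only [levyY]; push_cast; ring_nf
    rw [h]; exact hY k le_rfl
  | succ n ih =>
    have h : (fun ω => X ((k+1+(n+1) : ℕ):ℝ) ω - X (k:ℝ) ω)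
        = fun ω => levyY X (k+1+n) ω + (X ((k+1+n : ℕ):ℝ) ω - X (k:ℝ) ω) := by
      funext ω; simp only [levyY]; push_cast; ring
    rw [h]
    exact (hY (k+1+n) (by omega)).add ih

lemma levy_bddAbove_tail_measurable (hX : IsLevyProcess X) (k : ℕ) :
    MeasurableSet[⨆ j ≥ k, MeasurableSpace.comap (levyY X j) inferInstance]
      {ω | BddAbove (Set.range fun n : ℕ => X (n:ℝ) ω)} := by
  have hset : {ω | BddAbove (Set.range fun n : ℕ => X (n:ℝ) ω)}
      = ⋃ M : ℕ, ⋂ n : ℕ, {ω | X ((k+1+n : ℕ):ℝ) ω - X (k:ℝ) ω ≤ (M:ℝ)} := by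
    ext ω
    simp only [Set.mem_setOf_eq, Set.mem_iUnion, Set.mem_iInter]
    constructor
    · rintro ⟨b, hb⟩
      obtain ⟨M, hM⟩ := exists_nat_ge (b - X (k:ℝ) ω)
      refine ⟨M, fun n => ?_⟩
      have : X ((k+1+n : ℕ):ℝ) ω ≤ b := hb (Set.mem_range_self _)
      linarith
    · rintro ⟨M, hM⟩
      have : (Set.range fun n : ℕ => X (n:ℝ) ω)
          = (fun n : ℕ => X (n:ℝ) ω) '' (Set.Iic k) ∪ (fun n : ℕ => X (n:ℝ) ω) '' (Set.Ioi k) := by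
        rw [← Set.image_union, Set.Iic_union_Ioi, Set.image_univ]
      rw [this]
      refine BddAbove.union (((Set.finite_Iic k).image _).bddAbove) ⟨(M:ℝ) + X (k:ℝ) ω, ?_⟩
      rintro y ⟨n, hn, rfl⟩
      have hn' : k + 1 + (n - (k+1)) = n := by
        simp only [Set.mem_Ioi] at hn; omega
      have := hM (n - (k+1))
      rw [hn'] at this
      linarith
  rw [hset]
  refine MeasurableSet.iUnion fun M => MeasurableSet.iInter fun n => ?_
  exact (levy_partial_sum_measurable hX k n) measurableSet_Iic

/-- Kolmogorov 0-1 law for boundedness of a Lévy process at integer times. -/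
lemma levy_zero_one [IsProbabilityMeasure (ℙ : Measure Ω)] (hX : IsLevyProcess X) :
    ℙ {ω | BddAbove (Set.range fun n : ℕ => X (n:ℝ) ω)} = 0 ∨
    ℙ {ω | BddAbove (Set.range fun n : ℕ => X (n:ℝ) ω)} = 1 := by
  refine measure_zero_or_one_of_measurableSet_limsup_atTop
    (s := fun j : ℕ => MeasurableSpace.comap (levyY X j) inferInstance)
    (fun j => ((hX.meas _).sub (hX.meas _)).comap_le) (levy_iIndep hX) ?_
  rw [limsup_eq_iInf_iSup_of_nat]
  rw [MeasurableSpace.measurableSet_iInf]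
  intro k
  exact levy_bddAbove_tail_measurable hX k

/-- The key first-passage estimate on the dyadic grid with mesh `2^{-N}`. -/
lemma levy_grid [IsProbabilityMeasure (ℙ : Measure Ω)] (hX : IsLevyProcess X)
    (c b : ℝ) (hb : b < 0) (β : ENNReal) (hβ1 : β ≤ 1)
    (hβ : ∀ s : ℝ, 0 ≤ s → s ≤ 1 → β ≤ ℙ {ω | b < X s ω}) (N : ℕ) :
    ℙ (⋃ k : ℕ, {ω | c < X ((k:ℝ)/2^N) ω}) * β ≤ ℙ {ω | ∃ n : ℕ, c + b < X (n:ℝ) ω} := by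
  set E : ℕ → Set Ω := fun k => {ω | c < X ((k:ℝ)/2^N) ω} with hE
  have hEmeas : ∀ k, MeasurableSet (E k) := fun k =>
    (hX.meas _) measurableSet_Ioi
  set F := disjointed E with hF
  have hFmeas : ∀ k, MeasurableSet (F k) := MeasurableSet.disjointed hEmeas
  have hFdisj : Pairwise (Function.onFun Disjoint F) := disjoint_disjointed E
  set G : ℕ → Set Ω := fun k =>
    F k ∩ {ω | b < X ((⌈(k:ℝ)/2^N⌉₊ : ℝ)) ω - X ((k:ℝ)/2^N) ω} with hG
  have ht0 : ∀ k : ℕ, (0:ℝ) ≤ (k:ℝ)/2^N := fun k => by positivity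
  have htn : ∀ k : ℕ, (k:ℝ)/2^N ≤ (⌈(k:ℝ)/2^N⌉₊ : ℝ) := fun k => Nat.le_ceil _
  have hn1 : ∀ k : ℕ, ((⌈(k:ℝ)/2^N⌉₊ : ℝ)) < (k:ℝ)/2^N + 1 := fun k =>
    Nat.ceil_lt_add_one (ht0 k)
  have claim1 : ∀ k, ℙ (F k) * β ≤ ℙ (G k) := by
    intro k
    set t : ℝ := (k:ℝ)/2^N
    set n : ℕ := ⌈t⌉₊
    rcases eq_or_lt_of_le (htn k) with heq | hlt
    · have huniv : {ω | b < X ((n:ℕ):ℝ) ω - X t ω} = Set.univ := by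
        ext ω; simp only [Set.mem_setOf_eq, Set.mem_univ, iff_true]
        rw [← heq]; simpa [t] using hb
      have : G k = F k := by rw [hG]; simp only; rw [huniv, Set.inter_univ]
      rw [this]
      calc ℙ (F k) * β ≤ ℙ (F k) * 1 := mul_le_mul_right hβ1 _
        _ = ℙ (F k) := mul_one _
    · have hindep := hX.indepIncr t n (ht0 k) hlt
      have hFpast : MeasurableSet[pastSigma X t] (F k) := by
        have hEp : ∀ j : ℕ, j ≤ k → MeasurableSet[pastSigma X t] (E j) := by
          intro j hj
          refine comap_le_pastSigma X (ht0 j) ?_ _ ⟨Set.Ioi c, measurableSet_Ioi, rfl⟩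
          apply div_le_div_of_nonneg_right ?_ ?_ |>.trans_eq rfl
          · exact_mod_cast hj
          · positivity
        rw [hF, disjointed_eq_inter_compl]
        refine MeasurableSet.inter (hEp k le_rfl) ?_
        refine MeasurableSet.biInter (Set.to_countable _) fun j hj => (hEp j (Nat.le_of_lt hj)).compl
      have hZ : MeasurableSet[MeasurableSpace.comap
          (fun ω => X ((n:ℕ):ℝ) ω - X t ω) inferInstance]
          {ω | b < X ((n:ℕ):ℝ) ω - X t ω} :=
        ⟨Set.Ioi b, measurableSet_Ioi, rfl⟩
      have hmul : ℙ (G k) = ℙ {ω | b < X ((n:ℕ):ℝ) ω - X t ω} * ℙ (F k) := by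
        rw [hG]; simp only
        rw [Set.inter_comm]
        exact (Indep_iff _ _ _).1 hindep _ _ hZ hFpast
      have hstat : ℙ {ω | b < X ((n:ℕ):ℝ) ω - X t ω} = ℙ {ω | b < X ((n:ℝ) - t) ω} := by
        have hmap := hX.statIncr t n (ht0 k) hlt
        have h1 : Measure.map (fun ω => X ((n:ℕ):ℝ) ω - X t ω) ℙ (Set.Ioi b)
            = Measure.map (X ((n:ℝ) - t)) ℙ (Set.Ioi b) := by rw [hmap]
        rwa [Measure.map_apply (f := fun ω => X ((n:ℕ):ℝ) ω - X t ω) ((hX.meas _).sub (hX.meas _)) measurableSet_Ioi,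
          Measure.map_apply (hX.meas _) measurableSet_Ioi] at h1
      have hs0 : (0:ℝ) ≤ (n:ℝ) - t := by linarith
      have hs1 : (n:ℝ) - t ≤ 1 := by have := hn1 k; linarith
      rw [hmul, hstat, mul_comm]
      exact mul_le_mul_left (hβ (↑n - t) hs0 hs1) _
  have claim2 : ∀ k, G k ⊆ {ω | ∃ n : ℕ, c + b < X (n:ℝ) ω} := by
    intro k ω hω
    obtain ⟨hωF, hωZ⟩ := hω
    have hωE : ω ∈ E k := disjointed_subset E k hωF
    refine ⟨⌈(k:ℝ)/2^N⌉₊, ?_⟩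
    have h1 : c < X ((k:ℝ)/2^N) ω := hωE
    simp only [Set.mem_setOf_eq] at hωZ
    linarith
  have hGmeas : ∀ k, MeasurableSet (G k) := fun k =>
    (hFmeas k).inter (((hX.meas _).sub (hX.meas _)) measurableSet_Ioi)
  have hGdisj : Pairwise (Function.onFun Disjoint G) := fun i j hij =>
    (hFdisj hij).mono Set.inter_subset_left Set.inter_subset_left
  calc ℙ (⋃ k : ℕ, E k) * β = (∑' k, ℙ (F k)) * β := by
        rw [← iUnion_disjointed (f := E), measure_iUnion hFdisj hFmeas]
    _ = ∑' k, ℙ (F k) * β := ENNReal.tsum_mul_right.symm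
    _ ≤ ∑' k, ℙ (G k) := ENNReal.tsum_le_tsum claim1
    _ = ℙ (⋃ k, G k) := (measure_iUnion hGdisj hGmeas).symm
    _ ≤ ℙ {ω | ∃ n : ℕ, c + b < X (n:ℝ) ω} := measure_mono (Set.iUnion_subset claim2)

end Levy

/-- For a Lévy process `X`, any `Δ > 0`, `x ∈ ℝ` and `x₀ > 0`:
`P(Δ sup_{t≥0} X_t > x) * P(Δ inf_{t∈[0,1]} X_t > -x₀) ≤ P(Δ sup_{n∈ℕ} X_n > x - x₀)`. -/
theorem levy_sup_inequality
    {Ω : Type*} [MeasureSpace Ω] [IsProbabilityMeasure (ℙ : Measure Ω)]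
    (X : ℝ → Ω → ℝ) (hX : IsLevyProcess X)
    (Δ : ℝ) (hΔ : 0 < Δ) (x x₀ : ℝ) (hx₀ : 0 < x₀) :
    ℙ {ω | x < Δ * ⨆ t : Set.Ici (0:ℝ), X t ω} *
      ℙ {ω | -x₀ < Δ * ⨅ t : Set.Icc (0:ℝ) 1, X t ω} ≤
    ℙ {ω | x - x₀ < Δ * ⨆ n : ℕ, X n ω} := by
  by_cases hxx : x < x₀
  · -- trivial case: the right-hand side event is everything
    have hC : {ω | x - x₀ < Δ * ⨆ n : ℕ, X (n:ℝ) ω} = Set.univ := by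
      ext ω
      simp only [Set.mem_setOf_eq, Set.mem_univ, iff_true]
      have h0 : 0 ≤ ⨆ n : ℕ, X (n:ℝ) ω := by
        by_cases hbdd : BddAbove (Set.range fun n : ℕ => X (n:ℝ) ω)
        · have h := le_ciSup hbdd 0
          rw [show ((0:ℕ):ℝ) = (0:ℝ) by norm_num, hX.init ω] at h
          exact h
        · rw [Real.iSup_of_not_bddAbove hbdd]
      nlinarith [mul_nonneg hΔ.le h0]
    rw [hC, measure_univ]
    calc ℙ _ * ℙ _ ≤ 1 * 1 := mul_le_mul' prob_le_one prob_le_one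
      _ = 1 := one_mul 1
  · push_neg at hxx
    have hx : 0 < x := lt_of_lt_of_le hx₀ hxx
    set c : ℝ := x / Δ with hc_def
    set b : ℝ := -(x₀ / Δ) with hb_def
    have hc : 0 < c := div_pos hx hΔ
    have hb : b < 0 := neg_neg_iff_pos.mpr (div_pos hx₀ hΔ)
    set A := {ω : Ω | x < Δ * ⨆ t : Set.Ici (0:ℝ), X t ω} with hA
    set B := {ω : Ω | -x₀ < Δ * ⨅ t : Set.Icc (0:ℝ) 1, X t ω} with hB
    set C := {ω : Ω | x - x₀ < Δ * ⨆ n : ℕ, X (n:ℝ) ω} with hC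
    set S := {ω : Ω | BddAbove (Set.range fun n : ℕ => X (n:ℝ) ω)} with hSdef
    -- A ⊆ S
    have hAS : A ⊆ S := by
      intro ω hω
      simp only [hA, Set.mem_setOf_eq] at hω
      have hbdd : BddAbove (Set.range fun t : Set.Ici (0:ℝ) => X (t:ℝ) ω) := by
        by_contra h
        rw [Real.iSup_of_not_bddAbove h, mul_zero] at hω
        linarith
      refine hbdd.mono ?_
      rintro _ ⟨n, rfl⟩
      exact ⟨⟨(n:ℝ), Set.mem_Ici.mpr (by positivity)⟩, rfl⟩
    -- S is measurable
    have hSmeas : MeasurableSet S := by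
      have h := levy_bddAbove_tail_measurable hX 0
      exact ((iSup₂_le fun j _ => ((hX.meas _).sub (hX.meas _)).comap_le :
        (⨆ j ≥ 0, MeasurableSpace.comap (levyY X j) inferInstance) ≤ _)) _ h
    rcases levy_zero_one hX with hS0 | hS1
    · -- P(S) = 0, so P(A) = 0
      have hA0 : ℙ A = 0 := le_antisymm (le_trans (measure_mono hAS) hS0.le) zero_le
      rw [hA0, zero_mul]
      exact zero_le
    · -- P(S) = 1
      have hSc0 : ℙ Sᶜ = 0 := by
        rw [measure_compl hSmeas (measure_ne_top _ _), hS1, measure_univ, tsub_self]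
      -- β := P(B) works in levy_grid
      have hβ : ∀ s : ℝ, 0 ≤ s → s ≤ 1 → ℙ B ≤ ℙ {ω | b < X s ω} := by
        intro s hs0 hs1
        refine measure_mono ?_
        intro ω hω
        simp only [hB, Set.mem_setOf_eq] at hω
        have hbdd : BddBelow (Set.range fun t : Set.Icc (0:ℝ) 1 => X (t:ℝ) ω) := by
          have h := bddBelow_image_of_cadlag (fun u => X u ω)
            (fun t ht => hX.rightCont ω t ht) (fun t ht => hX.leftLim ω t ht)
          rwa [Set.image_eq_range] at h
        have h1 : (⨅ t : Set.Icc (0:ℝ) 1, X (t:ℝ) ω) ≤ X s ω :=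
          ciInf_le hbdd ⟨s, hs0, hs1⟩
        have h2 : -x₀ / Δ < ⨅ t : Set.Icc (0:ℝ) 1, X (t:ℝ) ω := by
          rw [div_lt_iff₀ hΔ]
          have h3 := mul_comm Δ (⨅ t : Set.Icc (0:ℝ) 1, X (t:ℝ) ω)
          linarith
        simp only [Set.mem_setOf_eq, hb_def]
        rw [← neg_div]
        linarith
      -- A ⊆ union of grid events
      set AN : ℕ → Set Ω := fun N => ⋃ k : ℕ, {ω | c < X ((k:ℝ)/2^N) ω} with hAN
      have hAsub : A ⊆ ⋃ N : ℕ, AN N := by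
        intro ω hω
        simp only [hA, Set.mem_setOf_eq] at hω
        have hcsup : c < ⨆ t : Set.Ici (0:ℝ), X (t:ℝ) ω := by
          rw [hc_def, div_lt_iff₀ hΔ]
          calc x < Δ * ⨆ t : Set.Ici (0:ℝ), X (t:ℝ) ω := hω
            _ = (⨆ t : Set.Ici (0:ℝ), X (t:ℝ) ω) * Δ := mul_comm _ _
        obtain ⟨⟨u, hu⟩, hcu⟩ := exists_lt_of_lt_ciSup hcsup
        have hu' : (0:ℝ) ≤ u := hu
        have hev : ∀ᶠ v in 𝓝[Set.Ici u] u, c < X v ω :=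
          (hX.rightCont ω u hu') (Ioi_mem_nhds hcu)
        rw [eventually_nhdsWithin_iff, Metric.eventually_nhds_iff] at hev
        obtain ⟨ε, hε, hεf⟩ := hev
        obtain ⟨N, hN⟩ : ∃ N : ℕ, (1:ℝ)/2^N < ε := by
          obtain ⟨N, hN⟩ := exists_pow_lt_of_lt_one hε (by norm_num : (1:ℝ)/2 < 1)
          exact ⟨N, by rwa [div_pow, one_pow] at hN⟩
        set k : ℕ := ⌈u * 2^N⌉₊ with hk
        have h2N : (0:ℝ) < 2^N := by positivity
        have huv : u ≤ (k:ℝ)/2^N := by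
          rw [le_div_iff₀ h2N]
          exact Nat.le_ceil _
        have hvu : (k:ℝ)/2^N < u + ε := by
          rw [div_lt_iff₀ h2N]
          have h1 : (k:ℝ) < u * 2^N + 1 := Nat.ceil_lt_add_one (by positivity)
          have h2 : (1:ℝ) < ε * 2^N := by
            rwa [div_lt_iff₀ h2N] at hN
          nlinarith
        refine Set.mem_iUnion.mpr ⟨N, Set.mem_iUnion.mpr ⟨k, ?_⟩⟩
        refine hεf ?_ (Set.mem_Ici.mpr huv)
        rw [Real.dist_eq, abs_lt]
        constructor <;> [linarith; linarith]
      -- grid events are monotone in N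
      have hmono : Monotone AN := by
        refine monotone_nat_of_le_succ fun N => ?_
        refine Set.iUnion_subset fun k => ?_
        refine Set.subset_iUnion_of_subset (2*k) ?_
        intro ω hω
        have h : ((2*k : ℕ):ℝ)/2^(N+1) = (k:ℝ)/2^N := by
          push_cast; ring
        show c < X (((2*k : ℕ):ℝ)/2^(N+1)) ω
        rw [h]; exact hω
      have hUnion : ℙ (⋃ N : ℕ, AN N) = ⨆ N : ℕ, ℙ (AN N) :=
        hmono.directed_le.measure_iUnion
      -- the target event of the grid lemma
      set T := {ω : Ω | ∃ n : ℕ, c + b < X (n:ℝ) ω} with hT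
      have hTS : T ∩ S ⊆ C := by
        rintro ω ⟨⟨n, hn⟩, hbdd⟩
        simp only [hC, Set.mem_setOf_eq]
        have h1 : X ((n:ℕ):ℝ) ω ≤ ⨆ m : ℕ, X (m:ℝ) ω := le_ciSup hbdd n
        have h2 : c + b = (x - x₀)/Δ := by
          rw [hc_def, hb_def, sub_div]; ring
        have h3 : (x - x₀)/Δ < ⨆ m : ℕ, X (m:ℝ) ω := by
          rw [← h2]; linarith
        rw [div_lt_iff₀ hΔ] at h3
        calc x - x₀ < (⨆ m : ℕ, X (m:ℝ) ω) * Δ := h3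
          _ = Δ * ⨆ m : ℕ, X (m:ℝ) ω := mul_comm _ _
      have hgrid : ∀ N : ℕ, ℙ (AN N) * ℙ B ≤ ℙ T :=
        fun N => levy_grid hX c b hb (ℙ B) prob_le_one hβ N
      calc ℙ A * ℙ B ≤ ℙ (⋃ N : ℕ, AN N) * ℙ B :=
            mul_le_mul_left (measure_mono hAsub) _
        _ = (⨆ N : ℕ, ℙ (AN N)) * ℙ B := by rw [hUnion]
        _ = ⨆ N : ℕ, ℙ (AN N) * ℙ B := by rw [ENNReal.iSup_mul]
        _ ≤ ℙ T := iSup_le hgrid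
        _ ≤ ℙ (T ∩ S) + ℙ Sᶜ := by
            refine le_trans (measure_mono ?_) (measure_union_le _ _)
            intro ω hω
            by_cases hωS : ω ∈ S
            · exact Or.inl ⟨hω, hωS⟩
            · exact Or.inr hωS
        _ = ℙ (T ∩ S) := by rw [hSc0, add_zero]
        _ ≤ ℙ C := measure_mono hTS
end
end

section
/- For each a > 0, let X^{(a)} be a Lévy process and let Δ : (0,∞) → (0,∞). If Δ(a)·X_1^{(a)} → 0 almost surely as a ↓ 0, then Δ(a)·inf_{t∈[0,1]} X_t^{(a)} → 0 in probability as a ↓ 0, i.e. for every ε > 0, P(|Δ(a)·inf_{t∈[0,1]} X_t^{(a)}| > ε) → 0 as a ↓ 0. -/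
open MeasureTheory ProbabilityTheory Filter Topology Set

noncomputable section

open scoped ENNReal


namespace LevyAux

/-- median of a measure on ℝ -/
def mmed (μ : Measure ℝ) : ℝ := sInf {x | 1/2 ≤ μ (Iic x)}

variable (μ : Measure ℝ) [IsProbabilityMeasure μ]

lemma mmed_set_nonempty : {x | 1/2 ≤ μ (Iic x)}.Nonempty := by
  have h := tendsto_measure_Iic_atTop (μ := μ)
  rw [measure_univ] at h
  have : ∀ᶠ x : ℝ in atTop, 1/2 < μ (Iic x) :=
    h.eventually_const_lt (by norm_num)
  rcases this.exists with ⟨x, hx⟩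
  exact ⟨x, hx.le⟩

lemma mmed_set_bddBelow : BddBelow {x | 1/2 ≤ μ (Iic x)} := by
  have h := tendsto_measure_Ici_atBot (μ := μ)
  rw [measure_univ] at h
  have : ∀ᶠ x : ℝ in atBot, 1/2 < μ (Ici x) :=
    h.eventually_const_lt (by norm_num)
  rcases this.exists with ⟨x, hx⟩
  refine ⟨x - 1, fun y hy => ?_⟩
  by_contra hxy
  push_neg at hxy
  have hdisj : Disjoint (Iic y) (Ici x) := by
    rw [Set.disjoint_left]
    intro a ha ha'
    simp only [mem_Iic, mem_Ici] at ha ha'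
    linarith
  have hsum : μ (Iic y) + μ (Ici x) ≤ 1 := by
    rw [← measure_union hdisj measurableSet_Ici]
    rw [← measure_univ (μ := μ)]
    exact measure_mono (subset_univ _)
  have : (1 : ℝ≥0∞) < μ (Iic y) + μ (Ici x) := by
    calc (1:ℝ≥0∞) = 1/2 + 1/2 := (ENNReal.add_halves 1).symm
    _ < 1/2 + μ (Ici x) := ENNReal.add_lt_add_left (by norm_num) hx
    _ ≤ μ (Iic y) + μ (Ici x) := add_le_add hy le_rfl
  exact absurd (lt_of_lt_of_le this hsum) (lt_irrefl _)

lemma half_le_measure_Iic_mmed : 1/2 ≤ μ (Iic (mmed μ)) := by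
  have hne := mmed_set_nonempty μ
  have hbdd := mmed_set_bddBelow μ
  have key : ∀ y, mmed μ < y → 1/2 ≤ μ (Iic y) := by
    intro y hy
    rcases (csInf_lt_iff hbdd hne).1 hy with ⟨s, hs, hsy⟩
    exact le_trans hs (measure_mono (Iic_subset_Iic.2 hsy.le))
  have hanti : ∀ {m n : ℕ}, m ≤ n →
      Iic (mmed μ + 1/((n:ℝ)+1)) ⊆ Iic (mmed μ + 1/((m:ℝ)+1)) := by
    intro m n hmn
    refine Iic_subset_Iic.2 ?_
    have : (1:ℝ)/(n+1) ≤ 1/(m+1) := by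
      apply one_div_le_one_div_of_le (by positivity)
      have : (m:ℝ) ≤ n := Nat.cast_le.2 hmn
      linarith
    linarith
  have hIic : Iic (mmed μ) = ⋂ n : ℕ, Iic (mmed μ + 1/(n+1)) := by
    ext x
    simp only [mem_Iic, mem_iInter]
    constructor
    · intro h n; have : (0:ℝ) < 1/((n:ℝ)+1) := by positivity
      linarith
    · intro h
      by_contra hx
      push_neg at hx
      obtain ⟨n, hn⟩ := exists_nat_one_div_lt (sub_pos.2 hx)
      have := h n
      linarith
  rw [hIic]
  rw [Antitone.measure_iInter (fun m n hmn => hanti hmn)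
    (fun n => (measurableSet_Iic).nullMeasurableSet) ⟨0, measure_ne_top _ _⟩]
  refine le_iInf fun n => key _ ?_
  have : (0:ℝ) < 1/((n:ℝ)+1) := by positivity
  linarith

lemma half_le_measure_Ici_mmed : 1/2 ≤ μ (Ici (mmed μ)) := by
  have hbdd := mmed_set_bddBelow μ
  have key : ∀ y, y < mmed μ → 1/2 ≤ μ (Ioi y) := by
    intro y hy
    have hy' : μ (Iic y) < 1/2 := by
      by_contra h
      push_neg at h
      exact absurd (csInf_le hbdd h) (not_le.2 hy)
    by_contra h
    push_neg at h
    have h1 : μ (Iic y) + μ (Ioi y) = 1 := by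
      have := measure_add_measure_compl (μ := μ) (measurableSet_Iic (a := y))
      rwa [compl_Iic, measure_univ] at this
    have : μ (Iic y) + μ (Ioi y) < 1/2 + 1/2 := ENNReal.add_lt_add hy' h
    rw [h1, ENNReal.add_halves] at this
    exact absurd this (lt_irrefl _)
  have hanti : ∀ {m n : ℕ}, m ≤ n →
      Ioi (mmed μ - 1/((n:ℝ)+1)) ⊆ Ioi (mmed μ - 1/((m:ℝ)+1)) := by
    intro m n hmn
    refine Ioi_subset_Ioi ?_
    have : (1:ℝ)/(n+1) ≤ 1/(m+1) := by
      apply one_div_le_one_div_of_le (by positivity)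
      have : (m:ℝ) ≤ n := Nat.cast_le.2 hmn
      linarith
    linarith
  have hIci : Ici (mmed μ) = ⋂ n : ℕ, Ioi (mmed μ - 1/(n+1)) := by
    ext x
    simp only [mem_Ici, mem_iInter, mem_Ioi]
    constructor
    · intro h n; have : (0:ℝ) < 1/((n:ℝ)+1) := by positivity
      linarith
    · intro h
      by_contra hx
      push_neg at hx
      obtain ⟨n, hn⟩ := exists_nat_one_div_lt (sub_pos.2 hx)
      have := h n
      linarith
  rw [hIci]
  rw [Antitone.measure_iInter (fun m n hmn => hanti hmn)
    (fun n => (measurableSet_Ioi).nullMeasurableSet) ⟨0, measure_ne_top _ _⟩]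
  refine le_iInf fun n => key _ ?_
  have : (0:ℝ) < 1/((n:ℝ)+1) := by positivity
  linarith

end LevyAux

namespace LevyAux2
open LevyAux
set_option linter.unusedSectionVars false

variable {Ω : Type*} [MeasureSpace Ω] [IsProbabilityMeasure (ℙ : Measure Ω)]

/-- probability of an event, as a real number -/
def pr (E : Set Ω) : ℝ := (ℙ E).toReal

lemma pr_nonneg (E : Set Ω) : 0 ≤ pr E := ENNReal.toReal_nonneg

lemma pr_le_one (E : Set Ω) : pr E ≤ 1 := by
  have := prob_le_one (μ := (ℙ : Measure Ω)) (s := E)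
  simpa [pr] using ENNReal.toReal_mono ENNReal.one_ne_top this

lemma pr_mono {E F : Set Ω} (h : E ⊆ F) : pr E ≤ pr F :=
  ENNReal.toReal_mono (measure_ne_top _ _) (measure_mono h)

lemma pr_univ : pr (univ : Set Ω) = 1 := by simp [pr]

lemma pr_union {E F : Set Ω} (hd : Disjoint E F) (hF : MeasurableSet F) :
    pr (E ∪ F) = pr E + pr F := by
  rw [pr, measure_union hd hF, ENNReal.toReal_add (measure_ne_top _ _) (measure_ne_top _ _)]
  rfl

lemma pr_compl {E : Set Ω} (hE : MeasurableSet E) : pr Eᶜ = 1 - pr E := by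
  have := measure_add_measure_compl (μ := (ℙ : Measure Ω)) hE
  rw [measure_univ] at this
  have h2 := congrArg ENNReal.toReal this
  rw [ENNReal.toReal_add (measure_ne_top _ _) (measure_ne_top _ _)] at h2
  simp only [ENNReal.toReal_one] at h2
  simp only [pr]
  linarith

lemma half_le_pr_ENN {E : Set Ω} (h : 1/2 ≤ ℙ E) : (1/2 : ℝ) ≤ pr E := by
  have := ENNReal.toReal_mono (measure_ne_top _ _) h
  simpa [pr] using this

/-- median of a real random variable -/
def rmed (Y : Ω → ℝ) : ℝ := mmed (Measure.map Y ℙ)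

lemma pr_map_eq {Y : Ω → ℝ} (hY : Measurable Y) {S : Set ℝ} (hS : MeasurableSet S) :
    ℙ (Y ⁻¹' S) = (Measure.map Y ℙ) S := (Measure.map_apply hY hS).symm

lemma half_le_pr_le_rmed {Y : Ω → ℝ} (hY : Measurable Y) :
    (1/2 : ℝ) ≤ pr (Y ⁻¹' Iic (rmed Y)) := by
  haveI : IsProbabilityMeasure (Measure.map Y ℙ) := Measure.isProbabilityMeasure_map hY.aemeasurable
  apply half_le_pr_ENN
  rw [pr_map_eq hY measurableSet_Iic]
  exact half_le_measure_Iic_mmed _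

lemma half_le_pr_ge_rmed {Y : Ω → ℝ} (hY : Measurable Y) :
    (1/2 : ℝ) ≤ pr (Y ⁻¹' Ici (rmed Y)) := by
  haveI : IsProbabilityMeasure (Measure.map Y ℙ) := Measure.isProbabilityMeasure_map hY.aemeasurable
  apply half_le_pr_ENN
  rw [pr_map_eq hY measurableSet_Ici]
  exact half_le_measure_Ici_mmed _

end LevyAux2



namespace LevyCore
open LevyAux LevyAux2
set_option linter.unusedSectionVars false

variable {Ω : Type*} [MeasureSpace Ω] [IsProbabilityMeasure (ℙ : Measure Ω)] {Z : ℝ → Ω → ℝ}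

lemma pastSigma_le (hZ : IsLevyProcess Z) (t : ℝ) :
    pastSigma Z t ≤ (inferInstance : MeasurableSpace Ω) :=
  iSup₂_le fun u _ => (hZ.meas u).comap_le

lemma mem_pastSigma (t : ℝ) {u' : ℝ} (hu : u' ∈ Icc (0:ℝ) t) {S : Set ℝ}
    (hS : MeasurableSet S) : MeasurableSet[pastSigma Z t] (Z u' ⁻¹' S) := by
  have h : MeasurableSpace.comap (Z u') inferInstance ≤ pastSigma Z t :=
    le_iSup₂ (f := fun u (_ : u ∈ Icc (0:ℝ) t) =>
      MeasurableSpace.comap (Z u) inferInstance) u' hu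
  exact h _ ⟨S, hS, rfl⟩

lemma indep_incr_past (hZ : IsLevyProcess Z) {t s : ℝ} (h0 : 0 ≤ t) (hts : t < s)
    {S : Set ℝ} (hS : MeasurableSet S) {A : Set Ω} (hA : MeasurableSet[pastSigma Z t] A) :
    ℙ ((fun ω => Z s ω - Z t ω) ⁻¹' S ∩ A)
      = ℙ ((fun ω => Z s ω - Z t ω) ⁻¹' S) * ℙ A :=
  (Indep_iff _ _ _).1 (hZ.indepIncr t s h0 hts) _ _ ⟨S, hS, rfl⟩ hA

lemma pr_indep_incr_past (hZ : IsLevyProcess Z) {t s : ℝ} (h0 : 0 ≤ t) (hts : t < s)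
    {S : Set ℝ} (hS : MeasurableSet S) {A : Set Ω} (hA : MeasurableSet[pastSigma Z t] A) :
    pr ((fun ω => Z s ω - Z t ω) ⁻¹' S ∩ A)
      = pr ((fun ω => Z s ω - Z t ω) ⁻¹' S) * pr A := by
  simp only [pr, indep_incr_past hZ h0 hts hS hA, ENNReal.toReal_mul]

lemma pr_incr_eq (hZ : IsLevyProcess Z) {t s : ℝ} (h0 : 0 ≤ t) (hts : t < s)
    {S : Set ℝ} (hS : MeasurableSet S) :
    pr ((fun ω => Z s ω - Z t ω) ⁻¹' S) = pr (Z (s - t) ⁻¹' S) := by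
  unfold pr
  rw [pr_map_eq (Y := fun ω => Z s ω - Z t ω) ((hZ.meas s).sub (hZ.meas t)) hS, hZ.statIncr t s h0 hts,
    ← pr_map_eq (hZ.meas _) hS]

lemma rmed_incr_eq (hZ : IsLevyProcess Z) {t s : ℝ} (h0 : 0 ≤ t) (hts : t < s) :
    rmed (fun ω => Z s ω - Z t ω) = rmed (Z (s - t)) := by
  unfold rmed
  rw [hZ.statIncr t s h0 hts]

lemma rmed_one_small (hZ : IsLevyProcess Z) {u : ℝ} (hu : 0 < u)
    (hp : pr {ω | u/2 ≤ |Z 1 ω|} ≤ 1/16) : |rmed (Z 1)| ≤ u/2 := by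
  have h1 := half_le_pr_ge_rmed (hZ.meas 1)
  have h2 := half_le_pr_le_rmed (hZ.meas 1)
  rw [abs_le]; constructor
  · by_contra h; push_neg at h
    have hsub : Z 1 ⁻¹' Iic (rmed (Z 1)) ⊆ {ω | u/2 ≤ |Z 1 ω|} := by
      intro ω hω
      simp only [mem_preimage, mem_Iic] at hω
      simp only [mem_setOf_eq]
      have hneg : u/2 ≤ -(Z 1 ω) := by linarith
      exact hneg.trans (neg_le_abs _)
    have := h2.trans (pr_mono hsub)
    linarith
  · by_contra h; push_neg at h
    have hsub : Z 1 ⁻¹' Ici (rmed (Z 1)) ⊆ {ω | u/2 ≤ |Z 1 ω|} := by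
      intro ω hω
      simp only [mem_preimage, mem_Ici] at hω
      simp only [mem_setOf_eq]
      have : u/2 ≤ Z 1 ω := by linarith
      exact this.trans (le_abs_self _)
    have := h1.trans (pr_mono hsub)
    linarith

lemma tail_bound (hZ : IsLevyProcess Z) {u : ℝ} (hu : 0 < u)
    (hp : pr {ω | u/2 ≤ |Z 1 ω|} ≤ 1/16) {s : ℝ} (hs0 : 0 < s) (hs1 : s ≤ 1) :
    pr (Z s ⁻¹' Ici (rmed (Z s) + u)) ≤ 2 * pr {ω | u/2 ≤ |Z 1 ω|} ∧
    pr (Z s ⁻¹' Iic (rmed (Z s) - u)) ≤ 2 * pr {ω | u/2 ≤ |Z 1 ω|} := by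
  have hp0 : 0 ≤ pr {ω | u/2 ≤ |Z 1 ω|} := pr_nonneg _
  rcases eq_or_lt_of_le hs1 with heq | hlt
  · subst heq
    have hm := rmed_one_small hZ hu hp
    rw [abs_le] at hm
    constructor
    · refine le_trans (pr_mono ?_) (by linarith)
      intro ω hω
      simp only [mem_preimage, mem_Ici] at hω
      simp only [mem_setOf_eq]
      have : u/2 ≤ Z 1 ω := by linarith [hm.1]
      exact this.trans (le_abs_self _)
    · refine le_trans (pr_mono ?_) (by linarith)
      intro ω hω
      simp only [mem_preimage, mem_Iic] at hω
      simp only [mem_setOf_eq]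
      have : u/2 ≤ -(Z 1 ω) := by linarith [hm.2]
      exact this.trans (neg_le_abs _)
  · -- 0 < s < 1
    set Y : Ω → ℝ := fun ω => Z 1 ω - Z s ω with hYdef
    have hYm : Measurable Y := (hZ.meas 1).sub (hZ.meas s)
    set a := rmed (Z s) with ha
    set m := rmed Y with hmdef
    have hs_mem : s ∈ Icc (0:ℝ) s := ⟨hs0.le, le_refl s⟩
    have hind : ∀ S T : Set ℝ, MeasurableSet S → MeasurableSet T →
        pr (Y ⁻¹' S ∩ Z s ⁻¹' T) = pr (Y ⁻¹' S) * pr (Z s ⁻¹' T) :=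
      fun S T hS hT => pr_indep_incr_past hZ hs0.le hlt hS (mem_pastSigma s hs_mem hT)
    have h3 := half_le_pr_ge_rmed hYm
    have h4 := half_le_pr_ge_rmed (hZ.meas s)
    have h3' := half_le_pr_le_rmed hYm
    have h4' := half_le_pr_le_rmed (hZ.meas s)
    have q_up : 1/4 ≤ pr (Z 1 ⁻¹' Ici (a + m)) := by
      refine le_trans ?_ (pr_mono (?_ :
        Y ⁻¹' Ici m ∩ Z s ⁻¹' Ici a ⊆ Z 1 ⁻¹' Ici (a + m)))
      · rw [hind _ _ measurableSet_Ici measurableSet_Ici]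
        calc (1/4 : ℝ) = (1/2) * (1/2) := by norm_num
        _ ≤ pr (Y ⁻¹' Ici m) * pr (Z s ⁻¹' Ici a) :=
          mul_le_mul h3 h4 (by norm_num) (pr_nonneg _)
      · intro ω hω
        simp only [mem_inter_iff, mem_preimage, mem_Ici, hYdef] at hω ⊢
        linarith [hω.1, hω.2]
    have q_dn : 1/4 ≤ pr (Z 1 ⁻¹' Iic (a + m)) := by
      refine le_trans ?_ (pr_mono (?_ :
        Y ⁻¹' Iic m ∩ Z s ⁻¹' Iic a ⊆ Z 1 ⁻¹' Iic (a + m)))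
      · rw [hind _ _ measurableSet_Iic measurableSet_Iic]
        calc (1/4 : ℝ) = (1/2) * (1/2) := by norm_num
        _ ≤ pr (Y ⁻¹' Iic m) * pr (Z s ⁻¹' Iic a) :=
          mul_le_mul h3' h4' (by norm_num) (pr_nonneg _)
      · intro ω hω
        simp only [mem_inter_iff, mem_preimage, mem_Iic, hYdef] at hω ⊢
        linarith [hω.1, hω.2]
    have hb : |a + m| ≤ u/2 := by
      rw [abs_le]; constructor
      · by_contra h; push_neg at h
        have hsub : Z 1 ⁻¹' Iic (a + m) ⊆ {ω | u/2 ≤ |Z 1 ω|} := by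
          intro ω hω
          simp only [mem_preimage, mem_Iic] at hω
          simp only [mem_setOf_eq]
          have : u/2 ≤ -(Z 1 ω) := by linarith
          exact this.trans (neg_le_abs _)
        have := q_dn.trans (pr_mono hsub)
        linarith
      · by_contra h; push_neg at h
        have hsub : Z 1 ⁻¹' Ici (a + m) ⊆ {ω | u/2 ≤ |Z 1 ω|} := by
          intro ω hω
          simp only [mem_preimage, mem_Ici] at hω
          simp only [mem_setOf_eq]
          have : u/2 ≤ Z 1 ω := by linarith
          exact this.trans (le_abs_self _)
        have := q_up.trans (pr_mono hsub)
        linarith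
    rw [abs_le] at hb
    constructor
    · have hsub2 : Y ⁻¹' Ici m ∩ Z s ⁻¹' Ici (a + u) ⊆ {ω | u/2 ≤ |Z 1 ω|} := by
        intro ω hω
        simp only [mem_inter_iff, mem_preimage, mem_Ici, hYdef] at hω
        simp only [mem_setOf_eq]
        have : u/2 ≤ Z 1 ω := by linarith [hω.1, hω.2, hb.1]
        exact this.trans (le_abs_self _)
      have hle := pr_mono hsub2
      rw [hind _ _ measurableSet_Ici measurableSet_Ici] at hle
      have hmul : (1/2) * pr (Z s ⁻¹' Ici (a + u))
          ≤ pr (Y ⁻¹' Ici m) * pr (Z s ⁻¹' Ici (a + u)) :=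
        mul_le_mul_of_nonneg_right h3 (pr_nonneg _)
      linarith
    · have hsub2 : Y ⁻¹' Iic m ∩ Z s ⁻¹' Iic (a - u) ⊆ {ω | u/2 ≤ |Z 1 ω|} := by
        intro ω hω
        simp only [mem_inter_iff, mem_preimage, mem_Iic, hYdef] at hω
        simp only [mem_setOf_eq]
        have : u/2 ≤ -(Z 1 ω) := by linarith [hω.1, hω.2, hb.2]
        exact this.trans (neg_le_abs _)
      have hle := pr_mono hsub2
      rw [hind _ _ measurableSet_Iic measurableSet_Iic] at hle
      have hmul : (1/2) * pr (Z s ⁻¹' Iic (a - u))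
          ≤ pr (Y ⁻¹' Iic m) * pr (Z s ⁻¹' Iic (a - u)) :=
        mul_le_mul_of_nonneg_right h3' (pr_nonneg _)
      linarith

lemma rmed_defect (hZ : IsLevyProcess Z) {u : ℝ} (hu : 0 < u)
    (hp : pr {ω | u/2 ≤ |Z 1 ω|} ≤ 1/16) {s r : ℝ} (hs : 0 < s) (hr : 0 < r)
    (hsr : s + r ≤ 1) :
    |rmed (Z (s + r)) - rmed (Z s) - rmed (Z r)| ≤ u := by
  have hp0 : 0 ≤ pr {ω | u/2 ≤ |Z 1 ω|} := pr_nonneg _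
  set Y : Ω → ℝ := fun ω => Z (s + r) ω - Z s ω with hYdef
  have hYm : Measurable Y := (hZ.meas (s + r)).sub (hZ.meas s)
  have hlt : s < s + r := lt_add_of_pos_right s hr
  have hmY : rmed Y = rmed (Z r) := by
    have := rmed_incr_eq hZ hs.le hlt
    rwa [show s + r - s = r by ring] at this
  set a := rmed (Z s) with ha
  have hs_mem : s ∈ Icc (0:ℝ) s := ⟨hs.le, le_refl s⟩
  have hind : ∀ S T : Set ℝ, MeasurableSet S → MeasurableSet T →
      pr (Y ⁻¹' S ∩ Z s ⁻¹' T) = pr (Y ⁻¹' S) * pr (Z s ⁻¹' T) :=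
    fun S T hS hT => pr_indep_incr_past hZ hs.le hlt hS (mem_pastSigma s hs_mem hT)
  have h3 := half_le_pr_ge_rmed hYm
  have h4 := half_le_pr_ge_rmed (hZ.meas s)
  have h3' := half_le_pr_le_rmed hYm
  have h4' := half_le_pr_le_rmed (hZ.meas s)
  rw [hmY] at h3 h3'
  have q_up : 1/4 ≤ pr (Z (s + r) ⁻¹' Ici (a + rmed (Z r))) := by
    refine le_trans ?_ (pr_mono (?_ :
      Y ⁻¹' Ici (rmed (Z r)) ∩ Z s ⁻¹' Ici a ⊆ Z (s + r) ⁻¹' Ici (a + rmed (Z r))))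
    · rw [hind _ _ measurableSet_Ici measurableSet_Ici]
      calc (1/4 : ℝ) = (1/2) * (1/2) := by norm_num
      _ ≤ pr (Y ⁻¹' Ici (rmed (Z r))) * pr (Z s ⁻¹' Ici a) :=
        mul_le_mul h3 h4 (by norm_num) (pr_nonneg _)
    · intro ω hω
      simp only [mem_inter_iff, mem_preimage, mem_Ici, hYdef] at hω ⊢
      linarith [hω.1, hω.2]
  have q_dn : 1/4 ≤ pr (Z (s + r) ⁻¹' Iic (a + rmed (Z r))) := by
    refine le_trans ?_ (pr_mono (?_ :
      Y ⁻¹' Iic (rmed (Z r)) ∩ Z s ⁻¹' Iic a ⊆ Z (s + r) ⁻¹' Iic (a + rmed (Z r))))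
    · rw [hind _ _ measurableSet_Iic measurableSet_Iic]
      calc (1/4 : ℝ) = (1/2) * (1/2) := by norm_num
      _ ≤ pr (Y ⁻¹' Iic (rmed (Z r))) * pr (Z s ⁻¹' Iic a) :=
        mul_le_mul h3' h4' (by norm_num) (pr_nonneg _)
    · intro ω hω
      simp only [mem_inter_iff, mem_preimage, mem_Iic, hYdef] at hω ⊢
      linarith [hω.1, hω.2]
  have htb := tail_bound hZ hu hp (lt_trans hs hlt) hsr
  rw [abs_le]; constructor
  · by_contra h; push_neg at h
    have hsub : Z (s + r) ⁻¹' Ici (a + rmed (Z r))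
        ⊆ Z (s + r) ⁻¹' Ici (rmed (Z (s + r)) + u) := by
      apply preimage_mono
      apply Ici_subset_Ici.2
      linarith
    have := q_up.trans ((pr_mono hsub).trans htb.1)
    linarith
  · by_contra h; push_neg at h
    have hsub : Z (s + r) ⁻¹' Iic (a + rmed (Z r))
        ⊆ Z (s + r) ⁻¹' Iic (rmed (Z (s + r)) - u) := by
      apply preimage_mono
      apply Iic_subset_Iic.2
      linarith
    have := q_dn.trans ((pr_mono hsub).trans htb.2)
    linarith

lemma rmed_zero (hZ : IsLevyProcess Z) : rmed (Z 0) = 0 := by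
  have hzero : Z 0 = fun _ => (0:ℝ) := funext hZ.init
  rw [hzero]
  unfold rmed mmed
  rw [Measure.map_const, measure_univ, one_smul]
  have hset : {x : ℝ | 1/2 ≤ (Measure.dirac (0:ℝ)) (Iic x)} = Ici 0 := by
    ext x
    simp only [mem_setOf_eq, mem_Ici]
    rw [Measure.dirac_apply' _ measurableSet_Iic]
    constructor
    · intro h
      by_contra hx
      push_neg at hx
      rw [Set.indicator_of_notMem (by simpa using hx.not_ge)] at h
      simp at h
    · intro hx
      rw [Set.indicator_of_mem (by simpa using hx)]
      exact ENNReal.half_le_self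
  rw [hset, csInf_Ici]

lemma rmed_dyadic_bound (hZ : IsLevyProcess Z) {u : ℝ} (hu : 0 < u)
    (hp : pr {ω | u/2 ≤ |Z 1 ω|} ≤ 1/16) :
    ∀ k j : ℕ, j ≤ 2^k →
      |rmed (Z ((j:ℝ)/2^k)) - ((j:ℝ)/2^k) * rmed (Z 1)| ≤ 3*u := by
  have hg1 : rmed (Z 1) - 1 * rmed (Z 1) = 0 := by ring
  have hdefect : ∀ s r : ℝ, 0 < s → 0 < r → s + r ≤ 1 →
      |(rmed (Z (s+r)) - (s+r) * rmed (Z 1)) - (rmed (Z s) - s * rmed (Z 1))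
        - (rmed (Z r) - r * rmed (Z 1))| ≤ u := by
    intro s r hs hr hsr
    have := rmed_defect hZ hu hp hs hr hsr
    have heq : (rmed (Z (s+r)) - (s+r) * rmed (Z 1)) - (rmed (Z s) - s * rmed (Z 1))
        - (rmed (Z r) - r * rmed (Z 1))
        = rmed (Z (s + r)) - rmed (Z s) - rmed (Z r) := by ring
    rwa [heq]
  intro k
  induction k with
  | zero =>
    intro j hj
    interval_cases j
    · simp only [Nat.cast_zero, pow_zero, zero_div, zero_mul, sub_zero,
        rmed_zero hZ, abs_zero]
      positivity
    · simp only [Nat.cast_one, pow_zero, div_one, one_mul, sub_self, abs_zero]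
      positivity
  | succ k ih =>
    have half : ∀ j : ℕ, 0 < j → j ≤ 2^k →
        |rmed (Z ((j:ℝ)/2^(k+1))) - ((j:ℝ)/2^(k+1)) * rmed (Z 1)| ≤ 2*u := by
      intro j hj hjk
      set x : ℝ := (j:ℝ)/2^(k+1) with hx
      have hxpos : 0 < x := by positivity
      have hsum : x + x = (j:ℝ)/2^k := by
        rw [hx]; push_cast; ring
      have hsum1 : x + x ≤ 1 := by
        rw [hsum]
        rw [div_le_one (by positivity)]
        exact_mod_cast hjk
      have hd := hdefect x x hxpos hxpos hsum1
      rw [hsum] at hd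
      have hih := ih j hjk
      rw [abs_le] at hd hih ⊢
      constructor <;> linarith [hd.1, hd.2, hih.1, hih.2]
    intro j hj
    rcases Nat.eq_zero_or_pos j with h0 | hjpos
    · subst h0
      simp only [Nat.cast_zero, zero_div, zero_mul, sub_zero, rmed_zero hZ, abs_zero]
      positivity
    by_cases hj2 : j ≤ 2^k
    · have := half j hjpos hj2
      linarith
    push_neg at hj2
    rcases eq_or_lt_of_le hj with heq | hlt
    · rw [heq]
      have hone : ((2^(k+1):ℕ):ℝ)/2^(k+1) = 1 := by
        push_cast
        rw [div_self (by positivity)]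
      rw [hone, hg1, abs_zero]
      positivity
    · set j' : ℕ := 2^(k+1) - j with hj'
      have hj'pos : 0 < j' := by omega
      have hj'le : j' ≤ 2^k := by
        have h2 : 2^(k+1) = 2^k + 2^k := by ring
        omega
      have hcast : ((j':ℕ):ℝ) = 2^(k+1) - (j:ℝ) := by
        rw [hj', Nat.cast_sub hj]
        push_cast
        ring
      set x : ℝ := (j:ℝ)/2^(k+1) with hx
      set x' : ℝ := ((j':ℕ):ℝ)/2^(k+1) with hx'
      have hxpos : 0 < x := by positivity
      have hx'pos : 0 < x' := by positivity
      have hsum' : x + x' = 1 := by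
        rw [hx, hx', hcast]
        field_simp
        ring
      have hb := half j' hj'pos hj'le
      rw [← hx'] at hb
      have hd := hdefect x x' hxpos hx'pos (le_of_eq hsum')
      rw [hsum', hg1] at hd
      rw [abs_le] at hd hb ⊢
      constructor <;> linarith [hd.1, hd.2, hb.1, hb.2]

lemma dyadic_tail (hZ : IsLevyProcess Z) {u : ℝ} (hu : 0 < u)
    (hp : pr {ω | u/2 ≤ |Z 1 ω|} ≤ 1/16) {k j : ℕ} (hj0 : 0 < j) (hjk : j ≤ 2^k) :
    pr (Z ((j:ℝ)/2^k) ⁻¹' Ici (5*u)) ≤ 2 * pr {ω | u/2 ≤ |Z 1 ω|} ∧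
    pr (Z ((j:ℝ)/2^k) ⁻¹' Iic (-(5*u))) ≤ 2 * pr {ω | u/2 ≤ |Z 1 ω|} := by
  have hd0 : 0 < (j:ℝ)/2^k := by positivity
  have hd1 : (j:ℝ)/2^k ≤ 1 := by
    rw [div_le_one (by positivity)]
    exact_mod_cast hjk
  have hM := rmed_dyadic_bound hZ hu hp k j hjk
  have hM1 := rmed_one_small hZ hu hp
  have habs : |rmed (Z ((j:ℝ)/2^k))| ≤ 3*u + u/2 := by
    have h1 : |((j:ℝ)/2^k) * rmed (Z 1)| ≤ u/2 := by
      rw [abs_mul]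
      have h2 : |(j:ℝ)/2^k| ≤ 1 := by rw [abs_of_pos hd0]; exact hd1
      nlinarith [abs_nonneg (rmed (Z 1)), abs_nonneg ((j:ℝ)/2^k)]
    calc |rmed (Z ((j:ℝ)/2^k))|
        ≤ |rmed (Z ((j:ℝ)/2^k)) - ((j:ℝ)/2^k) * rmed (Z 1)|
          + |((j:ℝ)/2^k) * rmed (Z 1)| := by
          have := abs_sub_abs_le_abs_sub (rmed (Z ((j:ℝ)/2^k)))
            (((j:ℝ)/2^k) * rmed (Z 1))
          have h3 := abs_add_le (rmed (Z ((j:ℝ)/2^k)) - ((j:ℝ)/2^k) * rmed (Z 1))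
            (((j:ℝ)/2^k) * rmed (Z 1))
          simpa using h3
    _ ≤ 3*u + u/2 := by linarith
  have htb := tail_bound hZ hu hp hd0 hd1
  rw [abs_le] at habs
  constructor
  · refine le_trans (pr_mono (preimage_mono (Ici_subset_Ici.2 ?_))) htb.1
    linarith
  · refine le_trans (pr_mono (preimage_mono (Iic_subset_Iic.2 ?_))) htb.2
    linarith

lemma pr_biUnion_finset {ι : Type*} {s : Finset ι} {f : ι → Set Ω}
    (hd : Set.PairwiseDisjoint ↑s f) (hm : ∀ j ∈ s, MeasurableSet (f j)) :
    pr (⋃ j ∈ s, f j) = ∑ j ∈ s, pr (f j) := by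
  rw [pr, measure_biUnion_finset hd hm, ENNReal.toReal_sum fun a _ => measure_ne_top _ _]
  rfl

lemma ottaviani (hZ : IsLevyProcess Z) {u : ℝ} (hu : 0 < u)
    (hp : pr {ω | u/2 ≤ |Z 1 ω|} ≤ 1/16) (k : ℕ) :
    ℙ (⋃ j ∈ Finset.range (2^k+1), Z ((j:ℝ)/2^k) ⁻¹' Iio (-(10*u)))
      ≤ 2 * ℙ {ω | Z 1 ω < -(5*u)} := by
  have hp0 : 0 ≤ pr {ω | u/2 ≤ |Z 1 ω|} := pr_nonneg _
  set c : ℝ := 10*u with hc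
  set t : ℕ → ℝ := fun j => (j:ℝ)/2^k with ht
  set A : ℕ → Set Ω := fun j =>
    (Z (t j) ⁻¹' Iio (-c)) ∩ (⋂ i ∈ Finset.range j, Z (t i) ⁻¹' (Iio (-c))ᶜ) with hA
  have htmono : ∀ {i j : ℕ}, i ≤ j → t i ≤ t j := by
    intro i j hij
    have hcast : (i:ℝ) ≤ (j:ℝ) := Nat.cast_le.2 hij
    simp only [ht]
    gcongr
  have hApast : ∀ j, MeasurableSet[pastSigma Z (t j)] (A j) := by
    intro j
    apply @MeasurableSet.inter _ (pastSigma Z (t j))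
    · exact mem_pastSigma (t j) ⟨by positivity, le_refl _⟩ measurableSet_Iio
    · refine MeasurableSet.iInter fun i => MeasurableSet.iInter fun hi => ?_
      exact mem_pastSigma (t j) ⟨by positivity,
        htmono (le_of_lt (Finset.mem_range.1 hi))⟩ measurableSet_Iio.compl
  have hAmeas : ∀ j, MeasurableSet (A j) := fun j => pastSigma_le hZ (t j) _ (hApast j)
  have key : ∀ {i j : ℕ}, i < j → Disjoint (A i) (A j) := by
    intro i j hij
    rw [Set.disjoint_left]
    intro ω hωi hωj
    obtain ⟨h1, -⟩ := hωi
    obtain ⟨-, h2⟩ := hωj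
    simp only [Set.mem_iInter, mem_preimage, mem_compl_iff, mem_Iio] at h2
    simp only [mem_preimage, mem_Iio] at h1
    exact h2 i (Finset.mem_range.2 hij) h1
  have hdisj : Set.PairwiseDisjoint ↑(Finset.range (2^k+1)) A :=
    fun i _ j _ hij => hij.lt_or_gt.elim (fun h => key h) (fun h => (key h).symm)
  set S : Set Ω := {ω | Z 1 ω < -(5*u)} with hS
  have hSm : MeasurableSet S := (hZ.meas 1) measurableSet_Iio
  have hAB : ∀ j ∈ Finset.range (2^k+1), pr (A j) ≤ 2 * pr (A j ∩ S) := by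
    intro j hjmem
    rcases eq_or_lt_of_le (Nat.lt_succ_iff.1 (Finset.mem_range.1 hjmem)) with heq | hlt
    · -- j = 2^k
      have ht1 : t j = 1 := by
        simp only [ht, heq]
        push_cast
        rw [div_self (by positivity)]
      have hsub : A j ⊆ S := by
        intro ω hω
        have h1 := hω.1
        rw [ht1] at h1
        simp only [mem_preimage, mem_Iio] at h1
        simp only [hS, mem_setOf_eq]
        rw [hc] at h1
        linarith
      have hmono := pr_mono (Set.subset_inter (Set.Subset.refl (A j)) hsub)
      linarith [pr_nonneg (A j ∩ S)]
    · -- j < 2^k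
      have ht0 : (0:ℝ) ≤ t j := by positivity
      have htlt : t j < 1 := by
        simp only [ht]
        rw [div_lt_one (by positivity)]
        exact_mod_cast hlt
      set B : Set Ω := (fun ω => Z 1 ω - Z (t j) ω) ⁻¹' Iio (5*u) with hB
      have hBmeas : MeasurableSet B := ((hZ.meas 1).sub (hZ.meas (t j))) measurableSet_Iio
      have hind := pr_indep_incr_past hZ ht0 htlt (measurableSet_Iio (a := 5*u)) (hApast j)
      have hBc : pr Bᶜ ≤ 2 * pr {ω | u/2 ≤ |Z 1 ω|} := by
        have hcompl : Bᶜ = (fun ω => Z 1 ω - Z (t j) ω) ⁻¹' Ici (5*u) := by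
          rw [hB, ← preimage_compl, compl_Iio]
        rw [hcompl, pr_incr_eq hZ ht0 htlt measurableSet_Ici]
        have hcast2 : 1 - t j = ((2^k - j : ℕ):ℝ)/2^k := by
          simp only [ht]
          rw [Nat.cast_sub hlt.le]
          field_simp
          simp
        rw [hcast2]
        exact (dyadic_tail hZ hu hp (by omega) (by omega)).1
      have hBge : (1/2 : ℝ) ≤ pr B := by
        have hcpl := pr_compl hBmeas
        linarith
      have hsub : B ∩ A j ⊆ A j ∩ S := by
        rintro ω ⟨hωB, hωA⟩
        refine ⟨hωA, ?_⟩
        have h1 : Z (t j) ω < -c := hωA.1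
        simp only [hB, mem_preimage, mem_Iio] at hωB
        simp only [hS, mem_setOf_eq]
        rw [hc] at h1
        linarith
      have hle := pr_mono hsub
      rw [hind] at hle
      have hmul : (1/2) * pr (A j) ≤ pr B * pr (A j) :=
        mul_le_mul_of_nonneg_right hBge (pr_nonneg _)
      linarith
  have hsum : pr (⋃ j ∈ Finset.range (2^k+1), A j)
      = ∑ j ∈ Finset.range (2^k+1), pr (A j) :=
    pr_biUnion_finset hdisj (fun j _ => hAmeas j)
  have hdisj2 : Set.PairwiseDisjoint ↑(Finset.range (2^k+1)) (fun j => A j ∩ S) :=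
    fun i hi j hj hij => ((hdisj hi hj hij).mono Set.inter_subset_left Set.inter_subset_left)
  have hsum2 : pr (⋃ j ∈ Finset.range (2^k+1), A j ∩ S)
      = ∑ j ∈ Finset.range (2^k+1), pr (A j ∩ S) :=
    pr_biUnion_finset hdisj2 (fun j _ => (hAmeas j).inter hSm)
  have hfinal : pr (⋃ j ∈ Finset.range (2^k+1), A j ∩ S) ≤ pr S :=
    pr_mono (Set.iUnion₂_subset fun j _ => Set.inter_subset_right)
  have hcover : (⋃ j ∈ Finset.range (2^k+1), Z (t j) ⁻¹' Iio (-c))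
      ⊆ ⋃ j ∈ Finset.range (2^k+1), A j := by
    intro ω hω
    simp only [Set.mem_iUnion, mem_preimage, mem_Iio] at hω
    obtain ⟨j0, hj0, hP⟩ := hω
    have hex : ∃ j, j ∈ Finset.range (2^k+1) ∧ Z (t j) ω < -c := ⟨j0, hj0, hP⟩
    classical
    have hspec := Nat.find_spec hex
    refine Set.mem_iUnion₂.2 ⟨Nat.find hex, hspec.1, hspec.2, ?_⟩
    simp only [Set.mem_iInter, mem_preimage, mem_compl_iff, mem_Iio]
    intro i hi hPi
    have hilt := Finset.mem_range.1 hi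
    exact Nat.find_min hex hilt
      ⟨Finset.mem_range.2 (hilt.trans (Finset.mem_range.1 hspec.1)), hPi⟩
  -- assemble in ℝ
  have hreal : pr (⋃ j ∈ Finset.range (2^k+1), Z (t j) ⁻¹' Iio (-c)) ≤ 2 * pr S := by
    calc pr (⋃ j ∈ Finset.range (2^k+1), Z (t j) ⁻¹' Iio (-c))
        ≤ pr (⋃ j ∈ Finset.range (2^k+1), A j) := pr_mono hcover
    _ = ∑ j ∈ Finset.range (2^k+1), pr (A j) := hsum
    _ ≤ ∑ j ∈ Finset.range (2^k+1), 2 * pr (A j ∩ S) := Finset.sum_le_sum hAB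
    _ = 2 * ∑ j ∈ Finset.range (2^k+1), pr (A j ∩ S) := by rw [Finset.mul_sum]
    _ = 2 * pr (⋃ j ∈ Finset.range (2^k+1), A j ∩ S) := by rw [hsum2]
    _ ≤ 2 * pr S := by linarith
  have h2S : (2 * ℙ S) ≠ ⊤ := ENNReal.mul_ne_top (by norm_num) (measure_ne_top _ _)
  rw [← ENNReal.toReal_le_toReal (measure_ne_top _ _) h2S]
  rw [ENNReal.toReal_mul]
  simpa [pr] using hreal

lemma comap_const_mul_le (c : ℝ) (f : Ω → ℝ) :
    MeasurableSpace.comap (fun ω => c * f ω) inferInstance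
      ≤ MeasurableSpace.comap f inferInstance := by
  have h1 : (fun ω => c * f ω) = (fun y : ℝ => c * y) ∘ f := rfl
  rw [h1, ← MeasurableSpace.comap_comp]
  exact MeasurableSpace.comap_mono (measurable_const_mul c).comap_le

lemma isLevy_smul {X : ℝ → Ω → ℝ} (hX : IsLevyProcess X) {c : ℝ} (hc : 0 < c) :
    IsLevyProcess (fun t ω => c * X t ω) := by
  constructor
  · exact fun t => (hX.meas t).const_mul c
  · intro ω; simp [hX.init ω]
  · intro ω t ht
    exact (continuous_mul_left c).continuousAt.comp_continuousWithinAt (hX.rightCont ω t ht)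
  · intro ω t ht
    obtain ⟨l, hl⟩ := hX.leftLim ω t ht
    exact ⟨c * l, hl.const_mul c⟩
  · intro t s h0 hts
    have hmono1 : MeasurableSpace.comap (fun ω => c * X s ω - c * X t ω) inferInstance
        ≤ MeasurableSpace.comap (fun ω => X s ω - X t ω) inferInstance := by
      have h1 : (fun ω => c * X s ω - c * X t ω)
          = fun ω => c * (X s ω - X t ω) := by funext ω; ring
      rw [h1]
      exact comap_const_mul_le c _
    have hmono2 : pastSigma (fun t ω => c * X t ω) t ≤ pastSigma X t := by
      refine iSup₂_le fun v hv => ?_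
      exact le_trans (comap_const_mul_le c (X v)) (le_iSup₂ (f := fun w (_ : w ∈ Icc (0:ℝ) t)
        => MeasurableSpace.comap (X w) inferInstance) v hv)
    exact indep_of_indep_of_le_right
      (indep_of_indep_of_le_left (hX.indepIncr t s h0 hts) hmono1) hmono2
  · intro t s h0 hts
    have h1 : (fun ω => c * X s ω - c * X t ω)
        = (fun y : ℝ => c * y) ∘ (fun ω => X s ω - X t ω) := by
      funext ω; show c * X s ω - c * X t ω = c * (X s ω - X t ω); ring
    have h2 : (fun ω => c * X (s - t) ω) = (fun y : ℝ => c * y) ∘ (X (s - t)) := rfl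
    show Measure.map (fun ω => c * X s ω - c * X t ω) ℙ = Measure.map (fun ω => c * X (s-t) ω) ℙ
    rw [h1, h2, ← Measure.map_map (f := fun ω => X s ω - X t ω) (measurable_const_mul c) ((hX.meas s).sub (hX.meas t)),
      ← Measure.map_map (measurable_const_mul c) (hX.meas (s - t)), hX.statIncr t s h0 hts]

lemma meas_tendsto_zero {f : ℕ → Ω → ℝ} (hm : ∀ n, Measurable (f n))
    (h : ∀ᵐ ω ∂(ℙ : Measure Ω), Tendsto (fun n => f n ω) atTop (𝓝 0)) {v : ℝ} (hv : 0 < v) :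
    Tendsto (fun n => ℙ {ω | v ≤ |f n ω|}) atTop (𝓝 0) := by
  have hTIM : TendstoInMeasure ℙ f atTop (fun _ => (0:ℝ)) :=
    tendstoInMeasure_of_tendsto_ae (fun n => (hm n).aestronglyMeasurable) h
  have := hTIM (ENNReal.ofReal v) (ENNReal.ofReal_pos.2 hv)
  refine this.congr (fun n => ?_)
  congr 1
  ext ω
  simp [Real.enorm_eq_ofReal_abs, ENNReal.ofReal_le_ofReal_iff (abs_nonneg (f n ω))]

end LevyCore

/-- If `Δ a * X a 1 → 0` almost surely as `a ↓ 0`, then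
`Δ a * inf_{t∈[0,1]} X a t → 0` in probability as `a ↓ 0`. -/
theorem levy_inf_tendsto_zero_in_probability
    {Ω : Type*} [MeasureSpace Ω] [IsProbabilityMeasure (ℙ : Measure Ω)]
    (X : ℝ → ℝ → Ω → ℝ) (Δ : ℝ → ℝ)
    (hLevy : ∀ a > 0, IsLevyProcess (X a))
    (hΔpos : ∀ a > 0, 0 < Δ a)
    (hΔ : ∀ᵐ ω ∂ℙ, Tendsto (fun a => Δ a * X a 1 ω) (𝓝[>] (0:ℝ)) (𝓝 0)) :
    ∀ ε > 0,
      Tendsto (fun a => ℙ {ω | ε < |Δ a * ⨅ t : Set.Icc (0:ℝ) 1, X a t ω|})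
        (𝓝[>] (0:ℝ)) (𝓝 0) := by
  intro ε hε
  classical
  rw [Filter.tendsto_iff_seq_tendsto]
  intro x hx
  simp only [Function.comp_def]
  set u : ℝ := ε/10 with hu10
  have hu : 0 < u := by positivity
  have hpos : ∀ᶠ n in atTop, 0 < x n :=
    hx.eventually (eventually_mem_nhdsWithin.mono fun a ha => ha)
  set y : ℕ → ℝ := fun n => if 0 < x n then x n else 1 with hy
  have hy_pos : ∀ n, 0 < y n := by
    intro n; by_cases h : 0 < x n <;> simp [hy, h]
  have hxy : ∀ᶠ n in atTop, y n = x n := hpos.mono fun n h => by simp [hy, h]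
  set f : ℕ → Ω → ℝ := fun n ω => Δ (y n) * X (y n) 1 ω with hf
  have hfm : ∀ n, Measurable (f n) := fun n => ((hLevy _ (hy_pos n)).meas 1).const_mul _
  have hytend : Tendsto y atTop (𝓝[>] (0:ℝ)) := hx.congr' (hxy.mono fun n h => h.symm)
  have hae : ∀ᵐ ω ∂(ℙ : Measure Ω), Tendsto (fun n => f n ω) atTop (𝓝 0) :=
    hΔ.mono fun ω hω => hω.comp hytend
  have h16 := LevyCore.meas_tendsto_zero hfm hae (v := u/2) (by positivity)
  have h5 := LevyCore.meas_tendsto_zero hfm hae (v := 5*u) (by positivity)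
  have hev16 : ∀ᶠ n in atTop,
      LevyAux2.pr {ω | u/2 ≤ |Δ (x n) * X (x n) 1 ω|} ≤ 1/16 := by
    have hsmall : ∀ᶠ n in atTop, ℙ {ω | u/2 ≤ |f n ω|} < ENNReal.ofReal (1/16) :=
      h16.eventually_lt_const (ENNReal.ofReal_pos.2 (by norm_num))
    filter_upwards [hxy, hsmall] with n hn1 hn2
    have hset : {ω : Ω | u/2 ≤ |Δ (x n) * X (x n) 1 ω|} = {ω | u/2 ≤ |f n ω|} := by
      simp only [hf, hn1]
    rw [hset]
    exact ENNReal.toReal_le_of_le_ofReal (by norm_num) hn2.le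
  have hbound : ∀ᶠ n in atTop,
      ℙ {ω | ε < |Δ (x n) * ⨅ t : Set.Icc (0:ℝ) 1, X (x n) t ω|}
        ≤ 2 * ℙ {ω | 5*u ≤ |f n ω|} := by
    filter_upwards [hpos, hxy, hev16] with n hn1 hn2 hn3
    have hΔn := hΔpos _ hn1
    set Z : ℝ → Ω → ℝ := fun t ω => Δ (x n) * X (x n) t ω with hZdef
    have hZ : IsLevyProcess Z := LevyCore.isLevy_smul (hLevy _ hn1) hΔn
    have hp : LevyAux2.pr {ω | u/2 ≤ |Z 1 ω|} ≤ 1/16 := hn3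
    set E : ℕ → Set Ω := fun k =>
      ⋃ j ∈ Finset.range (2^k+1), Z ((j:ℝ)/2^k) ⁻¹' Iio (-(10*u)) with hE
    have hEmono : Monotone E := by
      apply monotone_nat_of_le_succ
      intro k
      intro ω hω
      obtain ⟨j, hjmem, hωj⟩ := Set.mem_iUnion₂.1 hω
      have hjle := Finset.mem_range.1 hjmem
      refine Set.mem_iUnion₂.2 ⟨2*j, Finset.mem_range.2 (by omega), ?_⟩
      have hcast : ((2*j : ℕ):ℝ)/2^(k+1) = (j:ℝ)/2^k := by
        push_cast; ring
      rwa [hcast]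
    have hsubset : {ω | ε < |Δ (x n) * ⨅ t : Set.Icc (0:ℝ) 1, X (x n) t ω|}
        ⊆ ⋃ k, E k := by
      intro ω hω
      simp only [mem_setOf_eq] at hω
      by_cases hbdd : BddBelow (Set.range fun t : Set.Icc (0:ℝ) 1 => X (x n) (↑t) ω)
      swap
      · exfalso
        rw [Real.iInf_of_not_bddBelow hbdd] at hω
        simp only [mul_zero, abs_zero] at hω
        linarith
      have hmem0 : (0:ℝ) ∈ Set.Icc (0:ℝ) 1 := ⟨le_refl 0, by norm_num⟩
      have hinf0 : (⨅ t : Set.Icc (0:ℝ) 1, X (x n) (↑t) ω) ≤ 0 := by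
        have := ciInf_le hbdd (⟨0, hmem0⟩ : Set.Icc (0:ℝ) 1)
        rwa [(hLevy _ hn1).init ω] at this
      have hle : Δ (x n) * (⨅ t : Set.Icc (0:ℝ) 1, X (x n) (↑t) ω) ≤ 0 :=
        mul_nonpos_iff.2 (Or.inl ⟨hΔn.le, hinf0⟩)
      rw [abs_of_nonpos hle] at hω
      have hneg : Δ (x n) * (⨅ t : Set.Icc (0:ℝ) 1, X (x n) (↑t) ω) < -ε := by linarith
      have hinf_lt : (⨅ t : Set.Icc (0:ℝ) 1, X (x n) (↑t) ω) < -ε / Δ (x n) := by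
        rw [lt_div_iff₀ hΔn]
        have hcomm : (⨅ t : Set.Icc (0:ℝ) 1, X (x n) (↑t) ω) * Δ (x n)
            = Δ (x n) * (⨅ t : Set.Icc (0:ℝ) 1, X (x n) (↑t) ω) := mul_comm _ _
        linarith
      obtain ⟨t, ht⟩ := exists_lt_of_ciInf_lt hinf_lt
      have h10 : 10 * u = ε := by rw [hu10]; ring
      have htZ : Z (↑t) ω < -(10*u) := by
        rw [lt_div_iff₀ hΔn] at ht
        simp only [hZdef]
        have hcomm : X (x n) (↑t) ω * Δ (x n) = Δ (x n) * X (x n) (↑t) ω := mul_comm _ _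
        rw [h10]
        linarith
      rcases eq_or_lt_of_le t.2.2 with h1 | h1
      · refine Set.mem_iUnion.2 ⟨0, Set.mem_iUnion₂.2 ⟨1, by simp, ?_⟩⟩
        simp only [mem_preimage, mem_Iio]
        have hone : ((1:ℕ):ℝ)/2^(0:ℕ) = 1 := by norm_num
        rw [hone, ← h1]
        exact htZ
      · have hcont := (hLevy _ hn1).rightCont ω (↑t) t.2.1
        have hev : (fun v => X (x n) v ω) ⁻¹' Iio (-ε / Δ (x n))
            ∈ 𝓝[Set.Ici (↑t : ℝ)] (↑t : ℝ) := hcont (Iio_mem_nhds ht)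
        rcases Metric.mem_nhdsWithin_iff.1 hev with ⟨δ, hδ, hball⟩
        obtain ⟨k, hk⟩ := exists_pow_lt_of_lt_one hδ (by norm_num : (1:ℝ)/2 < 1)
        have h2k : (0:ℝ) < 2^k := by positivity
        have hk' : (1:ℝ)/2^k < δ := by
          rwa [div_pow, one_pow] at hk
        set j : ℕ := ⌈(↑t : ℝ) * 2^k⌉₊ with hj
        have ht0 : (0:ℝ) ≤ ↑t := t.2.1
        have hjle : j ≤ 2^k := by
          rw [hj, Nat.ceil_le]
          push_cast
          nlinarith [t.2.2]
        have htj : (↑t:ℝ) ≤ (j:ℝ)/2^k := by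
          rw [le_div_iff₀ h2k]
          exact Nat.le_ceil _
        have hjlt : (j:ℝ)/2^k < ↑t + δ := by
          have hc1 : (j:ℝ) < (↑t:ℝ)*2^k + 1 := by
            rw [hj]
            exact Nat.ceil_lt_add_one (by positivity : (0:ℝ) ≤ (↑t:ℝ)*2^k)
          rw [div_lt_iff₀ h2k]
          have : 1 < δ * 2^k := by
            rw [div_lt_iff₀ h2k] at hk'
            linarith
          nlinarith
        have hmemb : (j:ℝ)/2^k ∈ Metric.ball (↑t:ℝ) δ ∩ Set.Ici (↑t:ℝ) := by
          constructor
          · rw [Metric.mem_ball, Real.dist_eq, abs_of_nonneg (by linarith)]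
            linarith
          · exact htj
        have hXj := hball hmemb
        simp only [mem_preimage, mem_Iio] at hXj
        refine Set.mem_iUnion.2 ⟨k, Set.mem_iUnion₂.2 ⟨j, Finset.mem_range.2 (by omega), ?_⟩⟩
        simp only [mem_preimage, mem_Iio, hZdef]
        rw [lt_div_iff₀ hΔn] at hXj
        have hcomm : X (x n) ((j:ℝ)/2^k) ω * Δ (x n)
            = Δ (x n) * X (x n) ((j:ℝ)/2^k) ω := mul_comm _ _
        rw [h10]
        linarith
    calc ℙ {ω | ε < |Δ (x n) * ⨅ t : Set.Icc (0:ℝ) 1, X (x n) t ω|}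
        ≤ ℙ (⋃ k, E k) := measure_mono hsubset
    _ = ⨆ k, ℙ (E k) := (hEmono.directed_le).measure_iUnion
    _ ≤ 2 * ℙ {ω | Z 1 ω < -(5*u)} := iSup_le fun k => LevyCore.ottaviani hZ hu hp k
    _ ≤ 2 * ℙ {ω | 5*u ≤ |f n ω|} := by
        apply mul_le_mul_right
        apply measure_mono
        intro ω hω
        simp only [mem_setOf_eq] at hω ⊢
        have hfx : f n ω = Z 1 ω := by simp only [hf, hn2, hZdef]
        rw [hfx]
        have : 5*u ≤ -(Z 1 ω) := by linarith
        exact this.trans (neg_le_abs _)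
  have htend : Tendsto (fun n => 2 * ℙ {ω | 5*u ≤ |f n ω|}) atTop (𝓝 0) := by
    have := ENNReal.Tendsto.const_mul h5 (Or.inr (by norm_num : (2:ℝ≥0∞) ≠ ⊤))
    simpa using this
  refine tendsto_of_tendsto_of_tendsto_of_le_of_le' tendsto_const_nhds htend
    (Eventually.of_forall fun n => zero_le) hbound
end
end

section
/- Let α ∈ (1,2], and let X = (X_t)_{t≥0} be a real-valued stochastic process with càdlàg sample paths and X_0 = 0. Suppose there exist a constant C > 0 and a function V : (0,∞) → (0,∞) such that P(sup_{s≤t} X_s ≥ x) ≤ C · t · V(x)/x² for all t > 0 and x > 0, and a constant K > 0 such that V(λx) ≤ K · λ^{2−α} · V(x) for all λ ≥ 1 and x > 0. Then for all a > 0 and S > 0: P(sup_{t≥S} (X_t − a t) ≥ 0) ≤ (2CK / (1 − 2^{1−α})) · S · V(aS)/(aS)². -/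
open MeasureTheory ProbabilityTheory Filter Topology Set

noncomputable section

lemma aux_bdd (f : ℝ → ℝ)
    (hrc : ∀ t : ℝ, 0 ≤ t → ContinuousWithinAt f (Set.Ici t) t)
    (hll : ∀ t : ℝ, 0 < t → ∃ l, Tendsto f (𝓝[<] t) (𝓝 l)) (T : ℝ) :
    BddAbove (f '' Set.Icc 0 T) := by
  rcases lt_or_ge T 0 with hT | hT
  · rw [Set.Icc_eq_empty (by linarith)]; simp
  have key : ∀ t ∈ Set.Icc (0:ℝ) T, ∃ U : Set ℝ, U ∈ 𝓝 t ∧ BddAbove (f '' (U ∩ Set.Icc 0 T)) := by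
    intro t ht
    have h1 : {u | f u ≤ f t + 1} ∈ 𝓝[≥] t := by
      have := hrc t ht.1
      exact this.eventually (eventually_le_nhds (by linarith : f t < f t + 1))
    rcases mem_nhdsGE_iff_exists_Ico_subset.1 h1 with ⟨u, hu, hsub⟩
    rcases eq_or_lt_of_le ht.1 with h0 | h0
    · refine ⟨Set.Ioo (t-1) u, Ioo_mem_nhds (by linarith) hu, ⟨f t + 1, ?_⟩⟩
      rintro y ⟨z, ⟨⟨hz1, hz2⟩, hz3, hz4⟩, rfl⟩
      have : t ≤ z := by linarith
      exact hsub ⟨this, hz2⟩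
    · rcases hll t h0 with ⟨l, hl⟩
      have h3 : {u | f u ≤ l + 1} ∈ 𝓝[<] t :=
        hl.eventually (eventually_le_nhds (by linarith : l < l + 1))
      rcases mem_nhdsLT_iff_exists_Ioo_subset.1 h3 with ⟨w, hw, hsub'⟩
      refine ⟨Set.Ioo w u, Ioo_mem_nhds hw hu, ⟨max (f t + 1) (l + 1), ?_⟩⟩
      rintro y ⟨z, ⟨⟨hz1, hz2⟩, _⟩, rfl⟩
      rcases lt_or_ge z t with hzt | hzt
      · exact le_max_of_le_right (hsub' ⟨hz1, hzt⟩)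
      · exact le_max_of_le_left (hsub ⟨hzt, hz2⟩)
  choose! U hU hUb using key
  obtain ⟨s, hs, hcov⟩ := (isCompact_Icc : IsCompact (Set.Icc (0:ℝ) T)).elim_nhds_subcover U
    (fun x hx => hU x hx)
  have : f '' Set.Icc 0 T ⊆ ⋃ x ∈ s, f '' (U x ∩ Set.Icc 0 T) := by
    rintro y ⟨z, hz, rfl⟩
    rcases Set.mem_iUnion₂.1 (hcov hz) with ⟨x, hx, hzx⟩
    exact Set.mem_iUnion₂.2 ⟨x, hx, ⟨z, ⟨hzx, hz⟩, rfl⟩⟩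
  refine BddAbove.mono this ?_
  apply Set.Finite.bddAbove_biUnion (s.finite_toSet)|>.2
  intro x hx
  exact hUb x (hs x hx)

lemma aux_block (S t : ℝ) (hS : 0 < S) (ht : S ≤ t) :
    ∃ k : ℕ, 2^k * S ≤ t ∧ t ≤ 2^(k+1) * S := by
  have hr : 1 ≤ t / S := (one_le_div hS).2 ht
  have hr0 : 0 < t / S := by linarith
  set L := Real.logb 2 (t / S) with hL
  have hL0 : 0 ≤ L := Real.logb_nonneg one_lt_two hr
  have h2L : (2:ℝ) ^ L = t / S := Real.rpow_logb two_pos (by norm_num) hr0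
  refine ⟨⌊L⌋₊, ?_, ?_⟩
  · have : (2:ℝ) ^ ((⌊L⌋₊ : ℝ)) ≤ 2 ^ L :=
      Real.rpow_le_rpow_of_exponent_le one_le_two (Nat.floor_le hL0)
    rw [Real.rpow_natCast, h2L] at this
    calc (2:ℝ)^⌊L⌋₊ * S ≤ (t / S) * S := by nlinarith
    _ = t := by field_simp
  · have : (2:ℝ) ^ L ≤ 2 ^ ((⌊L⌋₊ + 1 : ℕ) : ℝ) := by
      apply Real.rpow_le_rpow_of_exponent_le one_le_two
      push_cast
      exact (Nat.lt_floor_add_one L).le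
    rw [Real.rpow_natCast, h2L] at this
    calc t = (t / S) * S := by field_simp
    _ ≤ 2^(⌊L⌋₊ + 1) * S := by nlinarith

lemma aux_pow_rpow (α : ℝ) (n : ℕ) :
    (2:ℝ)^n * ((2:ℝ)^n : ℝ)^(-α) = ((2:ℝ)^(1-α))^n := by
  have h1 : ((2:ℝ)^n : ℝ) = (2:ℝ)^((n:ℝ)) := (Real.rpow_natCast 2 n).symm
  rw [h1, ← Real.rpow_mul (by norm_num : (0:ℝ) ≤ 2), ← Real.rpow_add two_pos,
    ← Real.rpow_natCast ((2:ℝ)^(1-α)) n, ← Real.rpow_mul (by norm_num : (0:ℝ) ≤ 2)]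
  ring_nf

lemma aux_term (α : ℝ) (hα1 : 1 < α) (C S K b ε : ℝ) (hC : 0 < C) (hS : 0 < S)
    (hK : 0 < K) (hb : 0 < b) (hε : 0 < ε) (hεb : ε < b) (V : ℝ → ℝ)
    (hVb : 0 < V b)
    (hVK : ∀ l : ℝ, 1 ≤ l → ∀ x > 0, V (l * x) ≤ K * l ^ (2 - α) * V x) (n : ℕ) (hn : 1 ≤ n) :
    C * (2^(n+1)*S) * V (2^n * b - ε) / (2^n * b - ε)^2 ≤
      (2*C*K*S*(V b) * b^(α-2) * (b-ε)^(-α)) * ((2:ℝ)^(1-α))^n := by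
  set x := (2:ℝ)^n * b - ε with hxdef
  have h2n : (2:ℝ) ≤ 2^n := by
    calc (2:ℝ) = 2^1 := (pow_one 2).symm
    _ ≤ 2^n := pow_le_pow_right₀ one_le_two hn
  have hx_ge : 2^n * (b - ε) ≤ x := by
    have : (2:ℝ)^n * ε ≥ ε := by nlinarith
    simp only [hxdef]; nlinarith
  have hx_pos : 0 < x := by nlinarith
  have hxb : b ≤ x := by nlinarith
  have hlam : 1 ≤ x / b := (one_le_div hb).2 hxb
  have step1 : V x ≤ K * (x/b)^(2-α) * V b := by
    have := hVK (x/b) hlam b hb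
    rwa [div_mul_cancel₀ _ hb.ne'] at this
  have hxba : (x/b)^(2-α) = x^2 * x^(-α) * b^(α-2) := by
    rw [Real.div_rpow hx_pos.le hb.le]
    rw [show (2-α) = (2:ℝ) + (-α) by ring, Real.rpow_add hx_pos, Real.rpow_two]
    rw [show (α-2) = -((2:ℝ) + (-α)) by ring, Real.rpow_neg hb.le, div_eq_mul_inv]
  have step4 : x^(-α) ≤ ((2:ℝ)^n)^(-α) * (b-ε)^(-α) := by
    have h1 : x^(-α) ≤ ((2:ℝ)^n * (b-ε))^(-α) :=
      Real.rpow_le_rpow_of_nonpos (by nlinarith) hx_ge (by linarith)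
    have h2 : ((2:ℝ)^n * (b-ε))^(-α) = ((2:ℝ)^n)^(-α) * (b-ε)^(-α) :=
      Real.mul_rpow (by positivity) (by linarith)
    linarith [h1, h2.le, h2.ge]
  have hbpow : (0:ℝ) < b^(α-2) := Real.rpow_pos_of_pos hb _
  have hx2 : (0:ℝ) < x^2 := by positivity
  calc C * (2^(n+1)*S) * V x / x^2
      ≤ C * (2^(n+1)*S) * (K * (x/b)^(2-α) * V b) / x^2 := by
        gcongr
    _ = C * (2^(n+1)*S) * K * V b * b^(α-2) * x^(-α) := by
        rw [hxba]; field_simp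
    _ ≤ C * (2^(n+1)*S) * K * V b * b^(α-2) * (((2:ℝ)^n)^(-α) * (b-ε)^(-α)) := by
        apply mul_le_mul_of_nonneg_left step4 (by positivity)
    _ = (2*C*K*S*(V b) * b^(α-2) * (b-ε)^(-α)) * ((2:ℝ)^n * ((2:ℝ)^n)^(-α)) := by
        rw [pow_succ]; ring
    _ = (2*C*K*S*(V b) * b^(α-2) * (b-ε)^(-α)) * ((2:ℝ)^(1-α))^n := by
        rw [aux_pow_rpow]

/-- Dyadic tail bound: if a càdlàg process `X` with `X 0 = 0` satisfies the
maximal inequality `P(sup_{s≤t} X_s ≥ x) ≤ C t V(x)/x²` and `V(λx) ≤ K λ^(2-α) V(x)` for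
`λ ≥ 1`, `α ∈ (1,2]`, then for all `a, S > 0`,
`P(sup_{t≥S} (X_t - a t) ≥ 0) ≤ (2CK/(1 - 2^(1-α))) S V(aS)/(aS)²`. -/
theorem dyadic_tail_bound
    {Ω : Type*} [MeasureSpace Ω] [IsProbabilityMeasure (ℙ : Measure Ω)]
    (α : ℝ) (hα : α ∈ Set.Ioc (1:ℝ) 2)
    (X : ℝ → Ω → ℝ)
    (hX0 : ∀ ω, X 0 ω = 0)
    (hrc : ∀ ω, ∀ t : ℝ, 0 ≤ t → ContinuousWithinAt (fun u => X u ω) (Set.Ici t) t)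
    (hll : ∀ ω, ∀ t : ℝ, 0 < t → ∃ l, Tendsto (fun u => X u ω) (𝓝[<] t) (𝓝 l))
    (C : ℝ) (hC : 0 < C)
    (V : ℝ → ℝ) (hVpos : ∀ x > 0, 0 < V x)
    (hbound : ∀ t > 0, ∀ x > 0,
      ℙ {ω | x ≤ ⨆ s : Set.Icc (0:ℝ) t, X s ω} ≤ ENNReal.ofReal (C * t * V x / x ^ 2))
    (K : ℝ) (hK : 0 < K)
    (hVK : ∀ l : ℝ, 1 ≤ l → ∀ x > 0, V (l * x) ≤ K * l ^ (2 - α) * V x) :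
    ∀ a > 0, ∀ S > 0,
      ℙ {ω | (0:ℝ) ≤ ⨆ t : Set.Ici S, (X t ω - a * (t : ℝ))} ≤
        ENNReal.ofReal (2 * C * K / (1 - 2 ^ (1 - α)) * S * V (a * S) / (a * S) ^ 2) := by
  intro a ha S hS
  obtain ⟨hα1, hα2⟩ := hα
  have hb : 0 < a * S := mul_pos ha hS
  set q := (2:ℝ)^(1-α) with hqdef
  have hq0 : 0 < q := Real.rpow_pos_of_pos two_pos _
  have hq1 : q < 1 := Real.rpow_lt_one_of_one_lt_of_neg one_lt_two (by linarith)
  have h1q : 0 < 1 - q := by linarith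
  have hVb : 0 < V (a*S) := hVpos _ hb
  have hK1 : (1:ℝ) ≤ K := by
    have := hVK 1 le_rfl (a*S) hb
    rw [one_mul, Real.one_rpow, mul_one] at this
    nlinarith
  have hbdd : ∀ ω, ∀ T : ℝ, BddAbove (Set.range fun s : Set.Icc (0:ℝ) T => X s ω) := by
    intro ω T
    have h := aux_bdd (fun u => X u ω) (hrc ω) (hll ω) T
    rwa [← Set.range_restrict] at h
  -- main estimate for each ε
  have main : ∀ ε : ℝ, 0 < ε → ε < a*S →
      ℙ {ω | (0:ℝ) ≤ ⨆ t : Set.Ici S, (X t ω - a * (t : ℝ))} ≤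
        ENNReal.ofReal (C * (2^(0+1)*S) * V (a*S) / (a*S)^2) +
        ENNReal.ofReal ((2*C*K*S*(V (a*S)) * (a*S)^(α-2) * (a*S-ε)^(-α)) * (q/(1-q))) := by
    intro ε hε hεb
    set cε := 2*C*K*S*(V (a*S)) * (a*S)^(α-2) * (a*S-ε)^(-α) with hcεdef
    have hcε : 0 < cε := by
      have h1 : (0:ℝ) < a*S - ε := by linarith
      exact mul_pos (mul_pos (mul_pos (mul_pos (mul_pos (mul_pos two_pos hC) hK) hS) hVb)
        (Real.rpow_pos_of_pos hb _)) (Real.rpow_pos_of_pos h1 _)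
    set A0 : Set Ω := {ω | a*S ≤ ⨆ s : Set.Icc (0:ℝ) (2^(0+1)*S), X s ω} with hA0def
    set AA : ℕ → Set Ω :=
      fun m => {ω | 2^(m+1)*(a*S) - ε ≤ ⨆ s : Set.Icc (0:ℝ) (2^(m+1+1)*S), X s ω} with hAAdef
    have hincl : {ω | (0:ℝ) ≤ ⨆ t : Set.Ici S, (X t ω - a * (t : ℝ))} ⊆ A0 ∪ ⋃ m, AA m := by
      intro ω hω
      by_contra hcon
      rw [Set.mem_union] at hcon
      push_neg at hcon
      obtain ⟨h0, hk⟩ := hcon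
      rw [Set.mem_iUnion] at hk
      push_neg at hk
      simp only [hA0def, Set.mem_setOf_eq, not_le] at h0
      simp only [hAAdef, Set.mem_setOf_eq, not_le] at hk
      simp only [Set.mem_setOf_eq] at hω
      haveI hne : Nonempty (Set.Ici S) := ⟨⟨S, le_refl S⟩⟩
      set s0 := ⨆ s : Set.Icc (0:ℝ) (2^(0+1)*S), X s ω with hs0def
      have hδ : 0 < a*S - s0 := by linarith
      have hsup_le : (⨆ t : Set.Ici S, (X t ω - a * (t:ℝ))) ≤ - min (a*S - s0) ε := by
        apply ciSup_le
        intro t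
        obtain ⟨j, hj1, hj2⟩ := aux_block S t hS t.2
        match j, hj1, hj2 with
        | 0, hj1, hj2 =>
          have htmem : (t:ℝ) ∈ Set.Icc (0:ℝ) (2^(0+1)*S) := ⟨le_trans hS.le t.2, hj2⟩
          have hXle : X (t:ℝ) ω ≤ s0 := le_ciSup (hbdd ω _) (⟨(t:ℝ), htmem⟩ : Set.Icc (0:ℝ) (2^(0+1)*S))
          have hat : a * S ≤ a * (t:ℝ) := by have := t.2; nlinarith
          have hmin : min (a*S - s0) ε ≤ a*S - s0 := min_le_left _ _
          linarith
        | (m+1), hj1, hj2 =>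
          have htmem : (t:ℝ) ∈ Set.Icc (0:ℝ) (2^(m+1+1)*S) := ⟨le_trans hS.le t.2, hj2⟩
          have hXle : X (t:ℝ) ω ≤ ⨆ s : Set.Icc (0:ℝ) (2^(m+1+1)*S), X s ω :=
            le_ciSup (hbdd ω _) (⟨(t:ℝ), htmem⟩ : Set.Icc (0:ℝ) (2^(m+1+1)*S))
          have hklt := hk m
          have hat : 2^(m+1)*(a*S) ≤ a * (t:ℝ) := by
            have h2 : a * (2^(m+1)*S) ≤ a * (t:ℝ) := by
              apply mul_le_mul_of_nonneg_left hj1 ha.le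
            nlinarith
          have hmin : min (a*S - s0) ε ≤ ε := min_le_right _ _
          linarith
      have hminpos : 0 < min (a*S - s0) ε := lt_min hδ hε
      linarith
    have hA0bound : ℙ A0 ≤ ENNReal.ofReal (C * (2^(0+1)*S) * V (a*S) / (a*S)^2) := by
      rw [hA0def]
      exact hbound (2^(0+1)*S) (by positivity) (a*S) hb
    have hAAbound : ∀ m : ℕ, ℙ (AA m) ≤ ENNReal.ofReal (cε * q^(m+1)) := by
      intro m
      have hxpos : 0 < 2^(m+1)*(a*S) - ε := by
        have h2 : (2:ℝ) ≤ 2^(m+1) := by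
          calc (2:ℝ) = 2^1 := (pow_one 2).symm
          _ ≤ 2^(m+1) := pow_le_pow_right₀ one_le_two (Nat.le_add_left 1 m)
        nlinarith
      have hb2 := hbound (2^(m+1+1)*S) (by positivity) (2^(m+1)*(a*S) - ε) hxpos
      refine le_trans ?_ (le_trans hb2 (ENNReal.ofReal_le_ofReal ?_))
      · rw [hAAdef]
      · have := aux_term α hα1 C S K (a*S) ε hC hS hK hb hε hεb V hVb hVK (m+1)
          (Nat.le_add_left 1 m)
        rw [hcεdef, hqdef]
        exact this
    have hsummable : Summable (fun m : ℕ => cε * q^(m+1)) := by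
      have h := (summable_geometric_of_lt_one hq0.le hq1).mul_left (cε*q)
      refine h.congr fun m => ?_
      rw [pow_succ]; ring
    have htsum : ∑' m : ℕ, ℙ (AA m) ≤ ENNReal.ofReal (cε * (q/(1-q))) := by
      calc ∑' m : ℕ, ℙ (AA m) ≤ ∑' m : ℕ, ENNReal.ofReal (cε * q^(m+1)) :=
            ENNReal.tsum_le_tsum hAAbound
      _ = ENNReal.ofReal (∑' m : ℕ, cε * q^(m+1)) :=
            (ENNReal.ofReal_tsum_of_nonneg (fun m => by positivity) hsummable).symm
      _ ≤ ENNReal.ofReal (cε * (q/(1-q))) := by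
            apply ENNReal.ofReal_le_ofReal
            have he : ∀ m : ℕ, cε * q^(m+1) = (cε*q) * q^m := fun m => by rw [pow_succ]; ring
            rw [tsum_congr he, tsum_mul_left, tsum_geometric_of_lt_one hq0.le hq1,
              div_eq_mul_inv]
            ring_nf
            exact le_refl _
    calc ℙ {ω | (0:ℝ) ≤ ⨆ t : Set.Ici S, (X t ω - a * (t : ℝ))}
        ≤ ℙ (A0 ∪ ⋃ m, AA m) := measure_mono hincl
      _ ≤ ℙ A0 + ℙ (⋃ m, AA m) := measure_union_le _ _
      _ ≤ ℙ A0 + ∑' m : ℕ, ℙ (AA m) := by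
          exact add_le_add le_rfl (measure_iUnion_le _)
      _ ≤ _ := add_le_add hA0bound htsum
  -- take ε → 0 along a*S/(n+2)
  have hεn : ∀ n : ℕ, ℙ {ω | (0:ℝ) ≤ ⨆ t : Set.Ici S, (X t ω - a * (t : ℝ))} ≤
      ENNReal.ofReal (C * (2^(0+1)*S) * V (a*S) / (a*S)^2) +
      ENNReal.ofReal ((2*C*K*S*(V (a*S)) * (a*S)^(α-2) * (a*S-(a*S)/((n:ℝ)+2))^(-α)) * (q/(1-q))) := by
    intro n
    apply main
    · positivity
    · apply div_lt_self hb
      have : (0:ℝ) ≤ (n:ℝ) := Nat.cast_nonneg n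
      linarith
  have hlim : Tendsto (fun n : ℕ =>
      ENNReal.ofReal (C * (2^(0+1)*S) * V (a*S) / (a*S)^2) +
      ENNReal.ofReal ((2*C*K*S*(V (a*S)) * (a*S)^(α-2) * (a*S-(a*S)/((n:ℝ)+2))^(-α)) * (q/(1-q))))
      atTop (𝓝 (ENNReal.ofReal (C * (2^(0+1)*S) * V (a*S) / (a*S)^2) +
      ENNReal.ofReal ((2*C*K*S*(V (a*S)) * (a*S)^(α-2) * (a*S)^(-α)) * (q/(1-q))))) := by
    apply Tendsto.add tendsto_const_nhds
    apply (ENNReal.continuous_ofReal.tendsto _).comp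
    apply Tendsto.mul ?_ tendsto_const_nhds
    apply Tendsto.mul tendsto_const_nhds
    have h3 : Tendsto (fun n : ℕ => a*S - (a*S)/((n:ℝ)+2)) atTop (𝓝 (a*S)) := by
      have h4 : Tendsto (fun n : ℕ => (a*S)/((n:ℝ)+2)) atTop (𝓝 0) := by
        apply Tendsto.div_atTop tendsto_const_nhds
        exact tendsto_atTop_add_const_right _ _ tendsto_natCast_atTop_atTop
      have := Tendsto.sub (tendsto_const_nhds : Tendsto (fun _ : ℕ => a*S) atTop (𝓝 (a*S))) h4
      simpa using this
    have h4 : ContinuousAt (fun x : ℝ => x^(-α)) (a*S) :=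
      Real.continuousAt_rpow_const _ _ (Or.inl hb.ne')
    exact h4.tendsto.comp h3
  have hfinal := ge_of_tendsto hlim (Filter.Eventually.of_forall hεn)
  refine le_trans hfinal ?_
  rw [← ENNReal.ofReal_add (by positivity) ?hnn]
  case hnn =>
    have h2 := Real.rpow_pos_of_pos hb (α-2)
    have h3 := Real.rpow_pos_of_pos hb (-α)
    have : 0 < q/(1-q) := div_pos hq0 h1q
    positivity
  apply ENNReal.ofReal_le_ofReal
  have e1 : (a*S)^(α-2)*(a*S)^(-α) = ((a*S)^2)⁻¹ := by
    rw [← Real.rpow_add hb]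
    rw [show (α-2) + (-α) = -(2:ℝ) by ring, Real.rpow_neg hb.le]
    norm_num [Real.rpow_two]
  have e2 : (2*C*K*S*(V (a*S)) * (a*S)^(α-2) * (a*S)^(-α)) * (q/(1-q))
      = (2*C*K*S*(V (a*S)) * ((a*S)^2)⁻¹) * (q/(1-q)) := by
    rw [mul_assoc (2*C*K*S*(V (a*S))), e1]
  rw [e2]
  have hz : (1-q) * (1-q)⁻¹ = 1 := mul_inv_cancel₀ h1q.ne'
  have hw : (0:ℝ) < ((a*S)^2)⁻¹ := by positivity
  rw [div_eq_mul_inv, div_eq_mul_inv, div_eq_mul_inv, div_eq_mul_inv]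
  norm_num
  have hexp : 2*C*K*(1-q)⁻¹*S*(V (a*S))*((a*S)^2)⁻¹
      = 2*C*K*S*(V (a*S))*((a*S)^2)⁻¹*(q*(1-q)⁻¹) + 2*C*K*S*(V (a*S))*((a*S)^2)⁻¹ := by
    field_simp
    ring
  have hPT : C*(2*S)*(V (a*S))*((a*S)^2)⁻¹ ≤ 2*C*K*S*(V (a*S))*((a*S)^2)⁻¹ := by
    nlinarith [mul_nonneg (mul_nonneg (mul_nonneg (mul_nonneg (by linarith : (0:ℝ) ≤ 2*C) hS.le)
      hVb.le) hw.le) (by linarith : (0:ℝ) ≤ K - 1)]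
  linarith [hexp, hPT]
end
end
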